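/- arXiv:1911.04087 — 6 statements merged into one kernel-verified Lean document; each statement's English description precedes it below -/
import Mathlib

section
/- Let p : 𝔻 → [1,∞) be a measurable variable exponent with 1 < ess inf_{z∈𝔻} p(z) and ess sup_{z∈𝔻} p(z) < ∞. Suppose there is a constant C > 0 such that the modular inequality ∫_𝔻 |Pf(z)|^{p(z)} dA(z) ≤ C ∫_𝔻 |f(z)|^{p(z)} dA(z) holds for every measurable f : 𝔻 → ℂ with ∫_𝔻 |f(z)|^{p(z)} dA(z) < ∞ (such f are automatically Lebesgue integrable on 𝔻, so Pf is well defined). Then there exists a constant c such that p(z) = c for almost every z ∈ 𝔻. -/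
open MeasureTheory Complex Set

noncomputable section

/-- The open unit disc in the complex plane. -/
def unitDisc : Set ℂ := {z : ℂ | ‖z‖ < 1}

/-- The normalized Lebesgue area measure on `ℂ` (Lebesgue measure divided by `π`). -/
def areaD : Measure ℂ := (ENNReal.ofReal Real.pi)⁻¹ • volume

/-- The Bergman projection on the unit disc. -/
def bergmanP (f : ℂ → ℂ) (z : ℂ) : ℂ :=
  ∫ w in unitDisc, f w / (1 - (starRingEnd ℂ) w * z) ^ 2 ∂areaD

section Auxiliary

open Metric ComplexConjugate Filter

lemma unitDisc_eq_ball : unitDisc = Metric.ball 0 1 := by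
  ext z; simp [unitDisc, Metric.mem_ball, Complex.dist_eq]

lemma isOpen_unitDisc : IsOpen unitDisc := unitDisc_eq_ball ▸ Metric.isOpen_ball

lemma measurableSet_unitDisc : MeasurableSet unitDisc := isOpen_unitDisc.measurableSet

lemma areaD_unitDisc_ne_top : areaD unitDisc ≠ ⊤ := by
  rw [unitDisc_eq_ball, areaD]
  simp only [Measure.smul_apply, smul_eq_mul]
  exact ENNReal.mul_ne_top (ENNReal.inv_ne_top.mpr (by simp [Real.pi_pos])) measure_ball_lt_top.ne

/-- The auxiliary holomorphic function `z ↦ ∫_B (1 - w̄ z)⁻² dA(w)`. -/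
def gB (B : Set ℂ) (z : ℂ) : ℂ := ∫ w in B, ((1 - (starRingEnd ℂ) w * z) ^ 2)⁻¹ ∂areaD

lemma one_sub_conj_mul_ne_zero {w z : ℂ} (hw : w ∈ unitDisc) (hz : ‖z‖ ≤ 1) :
    1 - (starRingEnd ℂ) w * z ≠ 0 := by
  intro h
  have h1 : (1:ℂ) = (starRingEnd ℂ) w * z := by linear_combination h
  have h2 : (1:ℝ) = ‖(starRingEnd ℂ) w * z‖ := by rw [← h1]; simp
  rw [norm_mul, Complex.norm_conj] at h2
  have hw' : ‖w‖ < 1 := hw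
  nlinarith [norm_nonneg z, norm_nonneg w]

lemma gB_hasDerivAt {B : Set ℂ} (hB : B ⊆ unitDisc) (hBm : MeasurableSet B)
    {z₀ : ℂ} (hz₀ : z₀ ∈ unitDisc) : ∃ d, HasDerivAt (gB B) d z₀ := by
  haveI : IsFiniteMeasure (areaD.restrict B) := by
    constructor
    rw [Measure.restrict_apply_univ]
    exact lt_of_le_of_lt (measure_mono hB) areaD_unitDisc_ne_top.lt_top
  set r : ℝ := (1 + ‖z₀‖) / 2 with hr
  have hz₀' : ‖z₀‖ < 1 := hz₀
  have hr1 : r < 1 := by rw [hr]; linarith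
  have hrpos : 0 < 1 - r := by linarith
  set ε : ℝ := (1 - ‖z₀‖) / 2 with hε
  have hεpos : 0 < ε := by rw [hε]; linarith
  have hball : ∀ z ∈ Metric.ball z₀ ε, ‖z‖ ≤ r := by
    intro z hz
    rw [Metric.mem_ball, Complex.dist_eq] at hz
    have : ‖z‖ - ‖z₀‖ ≤ ‖z - z₀‖ :=
      norm_sub_norm_le z z₀
    rw [hr]; rw [hε] at hz; linarith
  have habs : ∀ w ∈ B, ∀ z ∈ Metric.ball z₀ ε,
      1 - r ≤ ‖1 - (starRingEnd ℂ) w * z‖ := by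
    intro w hw z hz
    have hw1 : ‖w‖ < 1 := hB hw
    have h2 : ‖(starRingEnd ℂ) w * z‖ ≤ r := by
      rw [norm_mul, Complex.norm_conj]
      calc ‖w‖ * ‖z‖ ≤ 1 * r :=
        mul_le_mul hw1.le (hball z hz) (norm_nonneg _) zero_le_one
      _ = r := one_mul r
    have h3 : ‖(1:ℂ)‖ - ‖(starRingEnd ℂ) w * z‖
        ≤ ‖1 - (starRingEnd ℂ) w * z‖ := norm_sub_norm_le _ _
    simp only [norm_one] at h3
    linarith
  have hmeasF : ∀ z : ℂ, Measurable fun w => ((1 - (starRingEnd ℂ) w * z) ^ 2)⁻¹ := by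
    intro z
    exact ((measurable_const.sub (Complex.continuous_conj.measurable.mul_const z)).pow_const 2).inv
  set F : ℂ → ℂ → ℂ := fun z w => ((1 - (starRingEnd ℂ) w * z) ^ 2)⁻¹ with hF
  set F' : ℂ → ℂ → ℂ := fun z w =>
    -(2 * (1 - (starRingEnd ℂ) w * z) ^ 1 * (0 - (starRingEnd ℂ) w * 1)) /
      ((1 - (starRingEnd ℂ) w * z) ^ 2) ^ 2 with hF'
  have key := hasDerivAt_integral_of_dominated_loc_of_deriv_le (μ := areaD.restrict B)
      (F := F) (F' := F') (x₀ := z₀) (bound := fun _ => 2 / (1 - r) ^ 3) (Metric.ball_mem_nhds z₀ hεpos)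
      ?_ ?_ ?_ ?_ ?_ ?_
  · exact ⟨_, key.2⟩
  · filter_upwards with z; exact (hmeasF z).aestronglyMeasurable
  · -- integrability of F z₀
    apply Integrable.mono' (g := fun _ => ((1-r)^2)⁻¹) (integrable_const _)
      (hmeasF z₀).aestronglyMeasurable
    filter_upwards [ae_restrict_mem hBm] with w hw
    have h1 := habs w hw z₀ (Metric.mem_ball_self hεpos)
    simp only [hF, norm_inv, norm_pow]
    rw [inv_le_inv₀ (pow_pos (lt_of_lt_of_le hrpos h1) 2) (by positivity)]
    exact pow_le_pow_left₀ hrpos.le h1 2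
  · -- AEStronglyMeasurable (F' z₀)
    apply Measurable.aestronglyMeasurable
    have hm : Measurable fun w => (1 : ℂ) - (starRingEnd ℂ) w * z₀ :=
      measurable_const.sub (Complex.continuous_conj.measurable.mul_const z₀)
    exact ((((hm.pow_const 1).const_mul 2).mul
      (measurable_const.sub (Complex.continuous_conj.measurable.mul_const 1))).neg).div
      ((hm.pow_const 2).pow_const 2)
  · -- bound
    filter_upwards [ae_restrict_mem hBm] with w hw z hz
    have hw1 : ‖w‖ < 1 := hB hw
    have h1 := habs w hw z hz
    set d := ‖1 - (starRingEnd ℂ) w * z‖ with hdd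
    have hd0 : 0 < d := lt_of_lt_of_le hrpos h1
    have hval : F' z w = (2 * (starRingEnd ℂ) w * (1 - (starRingEnd ℂ) w * z)) /
        ((1 - (starRingEnd ℂ) w * z) ^ 2) ^ 2 := by
      simp only [hF']; ring
    rw [hval]
    simp only [norm_div, norm_mul, norm_pow, Complex.norm_conj,
      Complex.norm_two, ← hdd]
    rw [div_le_div_iff₀ (by positivity) (by positivity)]
    have h3 : (1-r)^3 ≤ d^3 := pow_le_pow_left₀ hrpos.le h1 3
    nlinarith [mul_le_mul_of_nonneg_left h3 hd0.le, hw1.le, norm_nonneg w,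
      mul_nonneg hd0.le (pow_nonneg hrpos.le 3)]
  · exact integrable_const _
  · -- differentiability
    filter_upwards [ae_restrict_mem hBm] with w hw z hz
    have hne : 1 - (starRingEnd ℂ) w * z ≠ 0 :=
      one_sub_conj_mul_ne_zero (hB hw) ((hball z hz).trans hr1.le)
    have h0 : HasDerivAt (fun z : ℂ => 1 - (starRingEnd ℂ) w * z) (0 - (starRingEnd ℂ) w * 1) z := by
      simpa using ((hasDerivAt_id z).const_mul ((starRingEnd ℂ) w)).const_sub 1
    have h1 : HasDerivAt (fun z : ℂ => (1 - (starRingEnd ℂ) w * z) ^ 2)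
        (2 * (1 - (starRingEnd ℂ) w * z) ^ 1 * (0 - (starRingEnd ℂ) w * 1)) z := by
      simpa using h0.fun_pow 2
    have h2 := h1.fun_inv (pow_ne_zero 2 hne)
    simpa [hF, hF'] using h2

lemma countable_of_isolated {Z : Set ℂ} (h : ∀ z ∈ Z, ∃ U ∈ nhds z, U ∩ Z ⊆ {z}) :
    Z.Countable := by
  choose U hU hUsub using h
  obtain ⟨t, htc, hcov⟩ := (HereditarilyLindelof_LindelofSets Z).elim_nhds_subcover'
    (fun z hz => U z hz) hU
  have hsub : Z ⊆ ⋃ x ∈ t, ({(x : ℂ)} : Set ℂ) := by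
    intro z hz
    obtain ⟨x, hx, hzU⟩ := mem_iUnion₂.mp (hcov hz)
    exact mem_iUnion₂.mpr ⟨x, hx, hUsub x x.2 ⟨hzU, hz⟩⟩
  exact Countable.mono hsub (htc.biUnion fun _ _ => countable_singleton _)

/-- The zero set inside an open preconnected set of an analytic function that is not
identically zero is countable. -/
lemma countable_zeros {g : ℂ → ℂ} {S : Set ℂ} (hSc : IsPreconnected S)
    (hg : AnalyticOnNhd ℂ g S) (hne : ∃ z ∈ S, g z ≠ 0) :
    {z ∈ S | g z = 0}.Countable := by
  apply countable_of_isolated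
  rintro z ⟨hzS, hz0⟩
  rcases (hg z hzS).eventually_eq_zero_or_eventually_ne_zero with h | h
  · exfalso
    obtain ⟨z₁, hz₁S, hz₁⟩ := hne
    have : EqOn g 0 S := by
      apply hg.eqOn_zero_of_preconnected_of_frequently_eq_zero hSc hzS
      exact (h.filter_mono nhdsWithin_le_nhds).frequently
    exact hz₁ (this hz₁S)
  · rw [eventually_nhdsWithin_iff] at h
    obtain ⟨V, hV, hVsub⟩ := eventually_iff_exists_mem.mp h
    refine ⟨V, hV, ?_⟩
    rintro x ⟨hxV, hxS, hx0⟩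
    by_contra hxz
    exact hVsub x hxV (by simpa using hxz) hx0

lemma areaD_null_of_countable {Z : Set ℂ} (h : Z.Countable) : areaD Z = 0 := by
  rw [areaD]
  simp [h.measure_zero volume]

lemma gB_zero {B : Set ℂ} : gB B 0 = ((areaD B).toReal : ℂ) := by
  rw [gB]; simp [measureReal_def]

lemma bergmanP_indicator (B : Set ℂ) (hBm : MeasurableSet B) (hB : B ⊆ unitDisc) (c : ℂ)
    (z : ℂ) : bergmanP (B.indicator fun _ => c) z = c * gB B z := by
  rw [bergmanP, gB]
  have h1 : ∀ w, (B.indicator (fun _ => c) w) / (1 - (starRingEnd ℂ) w * z) ^ 2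
      = B.indicator (fun w => c * ((1 - (starRingEnd ℂ) w * z) ^ 2)⁻¹) w := by
    intro w
    by_cases hw : w ∈ B <;> simp [Set.indicator_apply, hw, div_eq_mul_inv]
  simp_rw [h1]
  rw [MeasureTheory.integral_indicator hBm, Measure.restrict_restrict hBm,
    Set.inter_eq_self_of_subset_left hB, MeasureTheory.integral_const_mul]

end Auxiliary

theorem modular_inequality_bergman_implies_constant_exponent
    (p : ℂ → ℝ) (hpm : Measurable p)
    (hp1 : ∀ z ∈ unitDisc, 1 ≤ p z)
    (hinf : 1 < essInf p (areaD.restrict unitDisc))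
    (hsup : ∃ M : ℝ, ∀ᵐ z ∂(areaD.restrict unitDisc), p z ≤ M)
    (C : ℝ) (hC : 0 < C)
    (hmod : ∀ f : ℂ → ℂ, Measurable f →
      (∫⁻ z in unitDisc, ENNReal.ofReal (‖f z‖ ^ p z) ∂areaD) < ⊤ →
      (∫⁻ z in unitDisc, ENNReal.ofReal (‖bergmanP f z‖ ^ p z) ∂areaD)
        ≤ ENNReal.ofReal C *
          ∫⁻ z in unitDisc, ENNReal.ofReal (‖f z‖ ^ p z) ∂areaD) :
    ∃ c : ℝ, ∀ᵐ z ∂(areaD.restrict unitDisc), p z = c := by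
  classical
  set μ := areaD.restrict unitDisc with hμdef
  obtain ⟨M, hM⟩ := hsup
  have hae1 : ∀ᵐ z ∂μ, 1 ≤ p z := by
    filter_upwards [ae_restrict_mem measurableSet_unitDisc] with z hz using hp1 z hz
  set s := essInf p μ with hs
  refine ⟨s, ?_⟩
  rcases eq_or_ne μ 0 with hμ0 | hμ0
  · simp [hμ0]
  haveI : Filter.NeBot (ae μ) := ae_neBot.mpr hμ0
  have hbddA : Filter.IsBoundedUnder (· ≤ ·) (ae μ) p := ⟨M, hM⟩
  have hbddB : Filter.IsBoundedUnder (· ≥ ·) (ae μ) p := ⟨1, hae1⟩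
  have hges : ∀ᵐ z ∂μ, s ≤ p z := ae_essInf_le hbddB
  suffices hle : ∀ᵐ z ∂μ, p z ≤ s by
    filter_upwards [hges, hle] with z h1 h2 using le_antisymm h2 h1
  by_contra hcon
  have hpos : μ {z | s < p z} ≠ 0 := by
    rw [ae_iff] at hcon; simpa [not_le] using hcon
  -- find ε > 0 with μ {z | s + ε ≤ p z} ≠ 0
  have hexε : ∃ n : ℕ, μ {z | s + 1/(n+1) ≤ p z} ≠ 0 := by
    by_contra hall
    push_neg at hall
    apply hpos
    refine measure_mono_null (fun z hz => ?_) (measure_iUnion_null fun n : ℕ => hall n)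
    have hz' : s < p z := hz
    obtain ⟨n, hn⟩ := exists_nat_one_div_lt (sub_pos.mpr hz')
    exact mem_iUnion.mpr ⟨n, by simp only [mem_setOf_eq]; linarith⟩
  obtain ⟨n, hA0⟩ := hexε
  set ε : ℝ := 1/(n+1) with hεdef
  have hεpos : 0 < ε := by positivity
  set Aset : Set ℂ := {z | s + ε ≤ p z} ∩ unitDisc with hAdef
  have hAm : MeasurableSet Aset :=
    (measurableSet_le measurable_const hpm).inter measurableSet_unitDisc
  have hAsub : Aset ⊆ unitDisc := inter_subset_right
  have hA : areaD Aset ≠ 0 := by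
    rwa [hμdef, Measure.restrict_apply (measurableSet_le measurable_const hpm)] at hA0
  set Bset : Set ℂ := {z | p z < s + ε/2} ∩ unitDisc with hBdef
  have hBm : MeasurableSet Bset :=
    (measurableSet_lt hpm measurable_const).inter measurableSet_unitDisc
  have hBsub : Bset ⊆ unitDisc := inter_subset_right
  have hB0 : areaD Bset ≠ 0 := by
    intro h0
    have hae2 : ∀ᵐ z ∂μ, s + ε/2 ≤ p z := by
      rw [ae_iff]
      have : {z | ¬ s + ε/2 ≤ p z} = {z | p z < s + ε/2} := by ext z; simp [not_le]
      rw [this, hμdef, Measure.restrict_apply (measurableSet_lt hpm measurable_const)]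
      exact h0
    have : s + ε/2 ≤ essInf p μ :=
      Filter.le_liminf_of_le (hbddA.isCoboundedUnder_ge) hae2
    rw [← hs] at this
    linarith
  have hBfin : areaD Bset ≠ ⊤ := fun h =>
    areaD_unitDisc_ne_top (top_le_iff.mp (h ▸ measure_mono hBsub))
  -- the auxiliary analytic function
  set g : ℂ → ℂ := gB Bset with hgdef
  have hgdiff : DifferentiableOn ℂ g unitDisc := fun z hz => by
    obtain ⟨d, hd⟩ := gB_hasDerivAt hBsub hBm hz
    exact hd.differentiableAt.differentiableWithinAt
  have hganal : AnalyticOnNhd ℂ g unitDisc := hgdiff.analyticOnNhd isOpen_unitDisc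
  have h0disc : (0:ℂ) ∈ unitDisc := by simp [unitDisc]
  have hg0 : g 0 ≠ 0 := by
    rw [hgdef, gB_zero]
    simp only [ne_eq, Complex.ofReal_eq_zero]
    exact ENNReal.toReal_ne_zero.mpr ⟨hB0, hBfin⟩
  have hZnull : areaD {z ∈ unitDisc | g z = 0} = 0 :=
    areaD_null_of_countable (countable_zeros
      (unitDisc_eq_ball ▸ (convex_ball (0:ℂ) 1).isPreconnected) hganal ⟨0, h0disc, hg0⟩)
  -- find δ > 0 with areaD (Aset ∩ {δ < ‖g‖}) ≠ 0
  have hAg : areaD (Aset ∩ {z | g z ≠ 0}) ≠ 0 := by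
    intro h0
    apply hA
    have hcov : Aset ⊆ (Aset ∩ {z | g z ≠ 0}) ∪ {z ∈ unitDisc | g z = 0} := by
      intro z hz
      by_cases h : g z = 0
      · exact Or.inr ⟨hAsub hz, h⟩
      · exact Or.inl ⟨hz, h⟩
    refine le_antisymm ?_ zero_le
    calc areaD Aset ≤ areaD ((Aset ∩ {z | g z ≠ 0}) ∪ {z ∈ unitDisc | g z = 0}) :=
          measure_mono hcov
    _ ≤ areaD (Aset ∩ {z | g z ≠ 0}) + areaD {z ∈ unitDisc | g z = 0} := measure_union_le _ _
    _ = 0 := by rw [h0, hZnull, add_zero]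
  have hexδ : ∃ m : ℕ, areaD (Aset ∩ {z | 1/(m+1) < ‖g z‖}) ≠ 0 := by
    by_contra hall
    push_neg at hall
    apply hAg
    refine le_antisymm ?_ zero_le
    calc areaD (Aset ∩ {z | g z ≠ 0})
        ≤ areaD (⋃ m : ℕ, Aset ∩ {z | 1/(m+1) < ‖g z‖}) := by
          apply measure_mono
          rintro z ⟨hzA, hz0⟩
          obtain ⟨m, hm⟩ := exists_nat_one_div_lt (norm_pos_iff.mpr hz0)
          exact mem_iUnion.mpr ⟨m, hzA, hm⟩
    _ = 0 := measure_iUnion_null fun m => hall m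
  obtain ⟨m, hA'0⟩ := hexδ
  set δ : ℝ := 1/(m+1) with hδdef
  have hδpos : 0 < δ := by positivity
  set A' : Set ℂ := Aset ∩ {z | δ < ‖g z‖} with hA'def
  have hA'm : MeasurableSet A' := by
    have heq : A' = Aset ∩ (unitDisc ∩ (fun z => ‖g z‖) ⁻¹' Set.Ioi δ) := by
      ext z
      simp only [hA'def, mem_inter_iff, mem_setOf_eq, mem_preimage, mem_Ioi]
      constructor
      · rintro ⟨hzA, hzg⟩; exact ⟨hzA, hAsub hzA, hzg⟩
      · rintro ⟨hzA, _, hzg⟩; exact ⟨hzA, hzg⟩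
    rw [heq]
    exact hAm.inter (ContinuousOn.isOpen_inter_preimage hgdiff.continuousOn.norm
      isOpen_unitDisc isOpen_Ioi).measurableSet
  have hA'sub : A' ⊆ unitDisc := fun z hz => hAsub hz.1
  have hA'ne : areaD A' ≠ 0 := hA'0
  have hA'fin : areaD A' ≠ ⊤ := fun h =>
    areaD_unitDisc_ne_top (top_le_iff.mp (h ▸ measure_mono hA'sub))
  -- main estimate for large t
  set a : ℝ := (areaD A').toReal with hadef
  set b : ℝ := (areaD Bset).toReal with hbdef
  have hapos : 0 < a := ENNReal.toReal_pos hA'ne hA'fin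
  have hbnn : 0 ≤ b := ENNReal.toReal_nonneg
  have hmain : ∀ t : ℝ, 1 ≤ t → 1 ≤ t * δ →
      (t*δ) ^ (s+ε) * a ≤ C * (t ^ (s+ε/2) * b) := by
    intro t ht1 htδ
    have ht0 : 0 < t := lt_of_lt_of_le one_pos ht1
    set f : ℂ → ℂ := Bset.indicator (fun _ => ((t:ℝ):ℂ)) with hfdef
    have hfm : Measurable f := measurable_const.indicator hBm
    -- modular of f
    have hRle : (∫⁻ z in unitDisc, ENNReal.ofReal (‖f z‖ ^ p z) ∂areaD)
        ≤ ENNReal.ofReal (t ^ (s + ε/2)) * areaD Bset := by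
      have hb : ∀ᵐ z ∂μ, ENNReal.ofReal (‖f z‖ ^ p z)
          ≤ Bset.indicator (fun _ => ENNReal.ofReal (t ^ (s+ε/2))) z := by
        filter_upwards [ae_restrict_mem measurableSet_unitDisc] with z hz
        by_cases hzB : z ∈ Bset
        · have h1 : ‖f z‖ = t := by
            simp [hfdef, Set.indicator_apply, hzB, Complex.norm_real, Real.norm_eq_abs, abs_of_pos ht0]
          rw [h1, Set.indicator_of_mem hzB]
          apply ENNReal.ofReal_le_ofReal
          exact Real.rpow_le_rpow_of_exponent_le ht1 (le_of_lt hzB.1)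
        · have h1 : ‖f z‖ = 0 := by
            simp [hfdef, Set.indicator_apply, hzB]
          rw [h1, Set.indicator_of_notMem hzB, Real.zero_rpow]
          · simp
          · have := hp1 z hz; linarith
      calc (∫⁻ z in unitDisc, ENNReal.ofReal (‖f z‖ ^ p z) ∂areaD)
          ≤ ∫⁻ z, Bset.indicator (fun _ => ENNReal.ofReal (t ^ (s+ε/2))) z ∂μ :=
            lintegral_mono_ae hb
      _ = ∫⁻ _ in Bset, ENNReal.ofReal (t ^ (s+ε/2)) ∂μ := lintegral_indicator hBm _
      _ = ENNReal.ofReal (t ^ (s+ε/2)) * μ Bset := setLIntegral_const _ _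
      _ = ENNReal.ofReal (t ^ (s+ε/2)) * areaD Bset := by
            rw [hμdef, Measure.restrict_apply hBm,
              Set.inter_eq_self_of_subset_left hBsub]
    have hRfin : (∫⁻ z in unitDisc, ENNReal.ofReal (‖f z‖ ^ p z) ∂areaD) < ⊤ :=
      lt_of_le_of_lt hRle (ENNReal.mul_lt_top ENNReal.ofReal_lt_top hBfin.lt_top)
    -- lower bound for modular of bergmanP f
    have hLge : ENNReal.ofReal ((t*δ) ^ (s+ε)) * areaD A'
        ≤ ∫⁻ z in unitDisc, ENNReal.ofReal (‖bergmanP f z‖ ^ p z) ∂areaD := by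
      have hstep : ∀ᵐ z ∂(areaD.restrict A'),
          ENNReal.ofReal ((t*δ) ^ (s+ε)) ≤
            ENNReal.ofReal (‖bergmanP f z‖ ^ p z) := by
        filter_upwards [ae_restrict_mem hA'm] with z hz
        obtain ⟨hzA, hzg⟩ := hz
        have hzdisc : z ∈ unitDisc := hAsub hzA
        have hp0 : 0 ≤ p z := le_trans zero_le_one (hp1 z hzdisc)
        have hPf : ‖bergmanP f z‖ = t * ‖g z‖ := by
          rw [hfdef, bergmanP_indicator Bset hBm hBsub _ z, norm_mul, Complex.norm_real, Real.norm_eq_abs,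
            abs_of_pos ht0, hgdef]
        apply ENNReal.ofReal_le_ofReal
        calc (t*δ) ^ (s+ε) ≤ (t*δ) ^ (p z) :=
              Real.rpow_le_rpow_of_exponent_le htδ hzA.1
        _ ≤ (t * ‖g z‖) ^ (p z) := by
              apply Real.rpow_le_rpow (by positivity) ?_ hp0
              exact mul_le_mul_of_nonneg_left (le_of_lt hzg) ht0.le
        _ = ‖bergmanP f z‖ ^ (p z) := by rw [hPf]
      calc ENNReal.ofReal ((t*δ) ^ (s+ε)) * areaD A'
          = ∫⁻ _ in A', ENNReal.ofReal ((t*δ) ^ (s+ε)) ∂areaD := (setLIntegral_const _ _).symm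
      _ ≤ ∫⁻ z in A', ENNReal.ofReal (‖bergmanP f z‖ ^ p z) ∂areaD :=
            lintegral_mono_ae hstep
      _ ≤ ∫⁻ z in unitDisc, ENNReal.ofReal (‖bergmanP f z‖ ^ p z) ∂areaD :=
            lintegral_mono_set hA'sub
    have hchain : ENNReal.ofReal ((t*δ) ^ (s+ε)) * areaD A'
        ≤ ENNReal.ofReal C * (ENNReal.ofReal (t ^ (s+ε/2)) * areaD Bset) :=
      le_trans hLge (le_trans (hmod f hfm hRfin) (mul_le_mul_right hRle _))
    -- convert to reals
    have hrhs_fin : ENNReal.ofReal C * (ENNReal.ofReal (t ^ (s+ε/2)) * areaD Bset) ≠ ⊤ :=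
      ENNReal.mul_ne_top ENNReal.ofReal_ne_top
        (ENNReal.mul_ne_top ENNReal.ofReal_ne_top hBfin)
    have := ENNReal.toReal_mono hrhs_fin hchain
    rw [ENNReal.toReal_mul, ENNReal.toReal_mul, ENNReal.toReal_mul,
      ENNReal.toReal_ofReal (Real.rpow_nonneg (by positivity) _),
      ENNReal.toReal_ofReal hC.le,
      ENNReal.toReal_ofReal (Real.rpow_nonneg ht0.le _)] at this
    exact this
  -- derive contradiction by letting t → ∞
  set K : ℝ := C * b / (δ ^ (s+ε) * a) with hKdef
  have hK1pos : 0 < δ ^ (s+ε) * a := by positivity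
  have hKnn : 0 ≤ K := div_nonneg (mul_nonneg hC.le hbnn) hK1pos.le
  set T : ℝ := max (max 1 (1/δ)) ((K+1) ^ (2/ε)) with hTdef
  have hT1 : 1 ≤ T := le_trans (le_max_left 1 (1/δ)) (le_max_left _ _)
  have hTδ : 1 ≤ T * δ := by
    have h1 : 1/δ ≤ T := le_trans (le_max_right 1 (1/δ)) (le_max_left _ _)
    calc (1:ℝ) = (1/δ) * δ := by field_simp
    _ ≤ T * δ := mul_le_mul_of_nonneg_right h1 hδpos.le
  have hT0 : 0 < T := lt_of_lt_of_le one_pos hT1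
  have hineq := hmain T hT1 hTδ
  -- rewrite (T*δ)^(s+ε) = T^(s+ε/2) * T^(ε/2) * δ^(s+ε)
  have hsplit : (T*δ) ^ (s+ε) = T ^ (s+ε/2) * T ^ (ε/2) * δ ^ (s+ε) := by
    rw [Real.mul_rpow hT0.le hδpos.le, ← Real.rpow_add hT0]
    ring_nf
  rw [hsplit] at hineq
  have hTpow_pos : 0 < T ^ (s+ε/2) := Real.rpow_pos_of_pos hT0 _
  have hKbound : T ^ (ε/2) ≤ K := by
    rw [hKdef, le_div_iff₀ hK1pos]
    have h2 : T ^ (s+ε/2) * T ^ (ε/2) * δ ^ (s+ε) * a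
        = (T ^ (ε/2) * (δ ^ (s+ε) * a)) * T ^ (s+ε/2) := by ring
    have h3 : C * (T ^ (s+ε/2) * b) = (C * b) * T ^ (s+ε/2) := by ring
    rw [h2, h3] at hineq
    exact le_of_mul_le_mul_right hineq hTpow_pos
  have hcontra : K + 1 ≤ T ^ (ε/2) := by
    have hbase : (K+1) ^ (2/ε) ≤ T := le_max_right _ _
    have := Real.rpow_le_rpow (Real.rpow_nonneg (by linarith) _) hbase
      (by positivity : (0:ℝ) ≤ ε/2)
    have hexp : (2/ε) * (ε/2) = 1 := by field_simp
    rwa [← Real.rpow_mul (by linarith : (0:ℝ) ≤ K+1), hexp, Real.rpow_one] at this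
  linarith

end
end

section
/- Let τ ∈ 𝔻. Then there exist a compact set K ⊆ 𝔻 that is a neighborhood of τ (i.e., τ lies in the interior of K) and a constant c > 0 such that for every measurable set E ⊆ K and every z ∈ K one has Re(Pχ_E(z)) ≥ c·|E|, where |E| denotes the (normalized) measure of E and χ_E is the characteristic function of E. -/
open MeasureTheory Complex Set

noncomputable section

lemma aux_abs_lb (s : ℝ) (v : ℂ) (hv : ‖v‖ ≤ 3 * s / 100) :
    97 * s / 100 ≤ ‖(s : ℂ) - v‖ := by
  have h := norm_sub_norm_le ((s : ℂ)) v
  have hs' : ‖v‖ ≥ 0 := norm_nonneg v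
  have hsr : 0 ≤ s := by nlinarith
  simp only [Complex.norm_real, Real.norm_eq_abs, _root_.abs_of_nonneg hsr] at h
  linarith

lemma aux_re_lb (s : ℝ) (hs0 : 0 < s) (hs1 : s ≤ 1) (v : ℂ)
    (hv : ‖v‖ ≤ 3 * s / 100) :
    (1 / 2 : ℝ) ≤ ((((s : ℂ) - v) ^ 2)⁻¹).re := by
  set a := v.re with ha
  set b := v.im with hb
  have hab : a ^ 2 + b ^ 2 ≤ (3 * s / 100) ^ 2 := by
    have h1 : ‖v‖ ^ 2 = a ^ 2 + b ^ 2 := by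
      rw [Complex.sq_norm, Complex.normSq_apply]; ring
    nlinarith [norm_nonneg v]
  have hA : |a| ≤ 3 * s / 100 := (Complex.abs_re_le_norm v).trans hv
  have ha1 : a ≤ 3 * s / 100 := (abs_le.mp hA).2
  have ha2 : -(3 * s / 100) ≤ a := (abs_le.mp hA).1
  have hre : ((((s : ℂ) - v) ^ 2)⁻¹).re
      = ((s - a) ^ 2 - b ^ 2) / (((s - a) ^ 2 + b ^ 2) ^ 2) := by
    rw [Complex.inv_re]
    have h1 : (((s : ℂ) - v) ^ 2).re = (s - a) ^ 2 - b ^ 2 := by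
      simp [pow_two, Complex.mul_re, Complex.sub_re, Complex.sub_im, ha, hb]
    have h2 : Complex.normSq (((s : ℂ) - v) ^ 2) = ((s - a) ^ 2 + b ^ 2) ^ 2 := by
      rw [map_pow]
      congr 1
      simp [Complex.normSq_apply, Complex.sub_re, Complex.sub_im]
      ring
    rw [h1, h2]
  rw [hre]
  have hsa : 0 < s - a := by nlinarith
  have hden : 0 < (((s - a) ^ 2 + b ^ 2) ^ 2) := by positivity
  rw [le_div_iff₀ hden]
  have hXY : (s - a) ^ 2 + b ^ 2 ≤ 10609 / 10000 * s ^ 2 := by nlinarith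
  have hT0 : 0 ≤ (s - a) ^ 2 + b ^ 2 := by positivity
  have hsq : ((s - a) ^ 2 + b ^ 2) ^ 2 ≤ (10609 / 10000 * s ^ 2) ^ 2 := by
    nlinarith
  have hs2 : s ^ 2 ≤ 1 := by nlinarith
  have hs4 : s ^ 2 * s ^ 2 ≤ s ^ 2 := mul_le_of_le_one_right (sq_nonneg s) hs2
  have hXmY : 9391 / 10000 * s ^ 2 ≤ (s - a) ^ 2 - b ^ 2 := by nlinarith
  nlinarith [hsq, hs4, hXmY]

theorem bergman_lower_pointwise_bound (τ : ℂ) (hτ : τ ∈ unitDisc) :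
    ∃ K : Set ℂ, K ⊆ unitDisc ∧ IsCompact K ∧ τ ∈ interior K ∧
      ∃ c : ℝ, 0 < c ∧
        ∀ E : Set ℂ, MeasurableSet E → E ⊆ K → ∀ z ∈ K,
          c * (areaD E).toReal ≤ (bergmanP (E.indicator fun _ => (1 : ℂ)) z).re := by
  have ht : ‖τ‖ < 1 := hτ
  set t : ℝ := ‖τ‖ with htdef
  have ht0 : 0 ≤ t := norm_nonneg τ
  set s : ℝ := 1 - t ^ 2 with hsdef
  have hs0 : 0 < s := by nlinarith
  have hs1 : s ≤ 1 := by nlinarith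
  set ε : ℝ := s / 100 with hεdef
  have hε0 : 0 < ε := by positivity
  set K : Set ℂ := Metric.closedBall τ ε with hKdef
  have hKsub : K ⊆ unitDisc := by
    intro z hz
    have hz' : ‖z - τ‖ ≤ ε := by
      simpa [hKdef, Complex.dist_eq] using hz
    have habs : ‖z‖ ≤ t + ε := by
      have := norm_add_le (z - τ) τ
      simp only [sub_add_cancel] at this
      linarith
    show ‖z‖ < 1
    have : ε < 1 - t := by nlinarith
    linarith
  -- key pointwise bound on the kernel
  have key : ∀ z ∈ K, ∀ w ∈ K,
      (1 / 2 : ℝ) ≤ (((1 - (starRingEnd ℂ) w * z) ^ 2)⁻¹).re ∧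
      97 * s / 100 ≤ ‖1 - (starRingEnd ℂ) w * z‖ := by
    intro z hz w hw
    have hz' : ‖z - τ‖ ≤ ε := by simpa [hKdef, Complex.dist_eq] using hz
    have hw' : ‖w - τ‖ ≤ ε := by simpa [hKdef, Complex.dist_eq] using hw
    have hwabs : ‖w‖ ≤ t + ε := by
      have := norm_add_le (w - τ) τ
      simp only [sub_add_cancel] at this
      linarith
    set v : ℂ := (starRingEnd ℂ) w * z - ((t ^ 2 : ℝ) : ℂ) with hvdef
    have hτ2 : (starRingEnd ℂ) τ * τ = ((t ^ 2 : ℝ) : ℂ) := by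
      rw [mul_comm, Complex.mul_conj]
      norm_cast
      rw [htdef, Complex.sq_norm]
    have hv1 : v = (starRingEnd ℂ) w * (z - τ) + ((starRingEnd ℂ) (w - τ)) * τ := by
      rw [hvdef, ← hτ2, map_sub]
      ring
    have hvabs : ‖v‖ ≤ 3 * s / 100 := by
      have h1 : ‖v‖ ≤ ‖w‖ * ‖z - τ‖
          + ‖w - τ‖ * ‖τ‖ := by
        rw [hv1]
        calc ‖_‖ ≤ ‖(starRingEnd ℂ) w * (z - τ)‖
              + ‖((starRingEnd ℂ) (w - τ)) * τ‖ := norm_add_le _ _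
          _ = ‖w‖ * ‖z - τ‖ + ‖w - τ‖ * ‖τ‖ := by
              rw [norm_mul, norm_mul, Complex.norm_conj, Complex.norm_conj]
      have h2 : ‖w‖ * ‖z - τ‖ ≤ (t + ε) * ε := by
        apply mul_le_mul hwabs hz' (norm_nonneg _) (by linarith)
      have h3 : ‖w - τ‖ * ‖τ‖ ≤ ε * t := by
        exact mul_le_mul hw' le_rfl ht0 hε0.le
      have hε1 : ε ≤ 1 / 100 := by rw [hεdef]; nlinarith
      nlinarith [norm_nonneg v]
    have hrw : 1 - (starRingEnd ℂ) w * z = ((s : ℝ) : ℂ) - v := by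
      rw [hvdef, hsdef]
      push_cast
      ring
    rw [hrw]
    exact ⟨aux_re_lb s hs0 hs1 v hvabs, aux_abs_lb s v hvabs⟩
  refine ⟨K, hKsub, isCompact_closedBall τ ε, ?_, 1 / 2, by norm_num, ?_⟩
  · rw [hKdef, interior_closedBall τ (ne_of_gt hε0)]
    exact Metric.mem_ball_self hε0
  · intro E hE hEK z hzK
    set g : ℂ → ℂ := fun w => ((1 - (starRingEnd ℂ) w * z) ^ 2)⁻¹ with hgdef
    -- rewrite the Bergman projection as an integral over E
    have hrw : bergmanP (E.indicator fun _ => (1 : ℂ)) z = ∫ w in E, g w ∂areaD := by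
      rw [bergmanP]
      have h1 : ∀ w, E.indicator (fun _ => (1 : ℂ)) w / (1 - (starRingEnd ℂ) w * z) ^ 2
          = E.indicator g w := by
        intro w
        by_cases hw : w ∈ E
        · simp [hw, hgdef, Set.indicator_of_mem, one_div]
        · simp [hw, Set.indicator_of_notMem]
      simp only [h1]
      rw [setIntegral_indicator hE, Set.inter_eq_self_of_subset_right (hEK.trans hKsub)]
    -- finiteness of the measure of E
    have hπ : (ENNReal.ofReal Real.pi)⁻¹ ≠ ⊤ := by
      simp [ENNReal.inv_ne_top, ENNReal.ofReal_pos, Real.pi_pos]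
    have hfinE : areaD E < ⊤ := by
      have h1 : areaD E ≤ areaD K :=
        measure_mono hEK
      have h2 : areaD K < ⊤ := by
        rw [areaD, Measure.smul_apply, smul_eq_mul]
        exact ENNReal.mul_lt_top hπ.lt_top Metric.isBounded_closedBall.measure_lt_top
      exact lt_of_le_of_lt h1 h2
    -- integrability of g on E
    have hmeas : Measurable g :=
      ((measurable_const.sub ((Complex.continuous_conj.measurable).mul_const z)).pow_const 2).inv
    have hbound : ∀ w ∈ E, ‖g w‖ ≤ ((97 * s / 100) ^ 2)⁻¹ := by
      intro w hw
      have hk := (key z hzK w (hEK hw)).2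
      have hpos : 0 < 97 * s / 100 := by positivity
      have : ‖g w‖ = (‖1 - (starRingEnd ℂ) w * z‖ ^ 2)⁻¹ := by
        rw [hgdef]
        simp [norm_inv, norm_pow]
      rw [this]
      apply inv_anti₀ (by positivity)
      exact pow_le_pow_left₀ hpos.le hk 2
    have hInt : IntegrableOn g E areaD := by
      apply Integrable.mono' (integrableOn_const (C := ((97 * s / 100) ^ 2)⁻¹) hfinE.ne)
        hmeas.aestronglyMeasurable.restrict
      exact (ae_restrict_iff' hE).mpr (ae_of_all _ hbound)
    -- compute the real part
    have hre2 : (∫ w in E, g w ∂areaD).re = ∫ w in E, (g w).re ∂areaD :=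
      (integral_re hInt).symm
    rw [hrw, hre2]
    have hconst : ∫ _ in E, (1 / 2 : ℝ) ∂areaD = (areaD E).toReal * (1 / 2) :=
      setIntegral_const _
    have hmono : ∫ _ in E, (1 / 2 : ℝ) ∂areaD ≤ ∫ w in E, (g w).re ∂areaD := by
      apply setIntegral_mono_on (integrableOn_const hfinE.ne) hInt.re hE
      intro w hw
      exact (key z hzK w (hEK hw)).1
    rw [hconst] at hmono
    linarith
end
end

section
/- Let τ ∈ ℝ²₊ (i.e., τ ∈ ℂ with Im τ > 0). Then there exist a compact set K ⊆ ℝ²₊ that is a neighborhood of τ (i.e., τ lies in the interior of K relative to ℂ) and a constant c > 0 such that for every measurable set E ⊆ K and every z ∈ K one has Re(B_{ℝ²₊}χ_E(z)) ≥ c·|E|, where |E| is the Lebesgue area measure of E and χ_E is the characteristic function of E. -/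
set_option maxHeartbeats 1000000


open MeasureTheory Complex Set

noncomputable section

/-- The open upper half-plane in `ℂ`. -/
def upperHalf : Set ℂ := {z : ℂ | 0 < z.im}

/-- The Bergman-type projection on the upper half-plane. -/
def bergmanUHP (f : ℂ → ℂ) (z : ℂ) : ℂ :=
  (-(1 / (Real.pi : ℂ))) * ∫ w in upperHalf, f w / (z - (starRingEnd ℂ) w) ^ 2

theorem bergmanUHP_lower_pointwise_bound (τ : ℂ) (hτ : τ ∈ upperHalf) :
    ∃ K : Set ℂ, K ⊆ upperHalf ∧ IsCompact K ∧ τ ∈ interior K ∧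
      ∃ c : ℝ, 0 < c ∧
        ∀ E : Set ℂ, MeasurableSet E → E ⊆ K → ∀ z ∈ K,
          c * (volume E).toReal ≤ (bergmanUHP (E.indicator fun _ => (1 : ℂ)) z).re := by
  have hb : 0 < τ.im := hτ
  have hπ : 0 < Real.pi := Real.pi_pos
  set b := τ.im with hbdef
  set r := b / 10 with hrdef
  have hr : 0 < r := by positivity
  -- bounds for points of the ball
  have key : ∀ z ∈ Metric.closedBall τ r, |z.re - τ.re| ≤ r ∧ |z.im - b| ≤ r := by
    intro z hz
    rw [Metric.mem_closedBall, Complex.dist_eq] at hz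
    constructor
    · exact le_trans (by simpa using Complex.abs_re_le_norm (z - τ)) hz
    · exact le_trans (by simpa using Complex.abs_im_le_norm (z - τ)) hz
  have hKsub : Metric.closedBall τ r ⊆ upperHalf := by
    intro z hz
    have h2 := abs_le.1 (key z hz).2
    show 0 < z.im
    rw [hrdef] at h2
    linarith [h2.1]
  -- the pointwise kernel lower bound
  have hpoint : ∀ z ∈ Metric.closedBall τ r, ∀ w ∈ Metric.closedBall τ r,
      500 / (3721 * Real.pi * b ^ 2) ≤
        (-(1 / (Real.pi : ℂ)) * (1 / (z - (starRingEnd ℂ) w) ^ 2)).re := by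
    intro z hz w hw
    obtain ⟨hz1, hz2⟩ := key z hz
    obtain ⟨hw1, hw2⟩ := key w hw
    rw [hrdef] at hz1 hz2 hw1 hw2
    obtain ⟨hz1a, hz1b⟩ := abs_le.1 hz1
    obtain ⟨hz2a, hz2b⟩ := abs_le.1 hz2
    obtain ⟨hw1a, hw1b⟩ := abs_le.1 hw1
    obtain ⟨hw2a, hw2b⟩ := abs_le.1 hw2
    set x := z.re - w.re with hxdef
    set y := z.im + w.im with hydef
    have hre : (z - (starRingEnd ℂ) w).re = x := by simp [hxdef]
    have him : (z - (starRingEnd ℂ) w).im = y := by simp [hydef]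
    clear_value x y
    have hx2 : x ^ 2 ≤ b ^ 2 / 25 := by nlinarith
    have hy1 : 9 * b / 5 ≤ y := by rw [hydef]; linarith
    have hy2 : y ≤ 11 * b / 5 := by rw [hydef]; linarith
    have hy12 : 81 * b ^ 2 / 25 ≤ y ^ 2 := by nlinarith
    have hy22 : y ^ 2 ≤ 121 * b ^ 2 / 25 := by nlinarith
    have hs2 : x ^ 2 + y ^ 2 ≤ 122 * b ^ 2 / 25 := by linarith
    have hy0 : 0 < y := by linarith
    have hs0 : 0 < x ^ 2 + y ^ 2 := by positivity
    have hprod : (x ^ 2 + y ^ 2) ^ 2 ≤ (122 * b ^ 2 / 25) ^ 2 :=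
      pow_le_pow_left₀ hs0.le hs2 2
    have hmul : 3721 * b ^ 2 * (16 * b ^ 2 / 5) ≤ 3721 * b ^ 2 * (y ^ 2 - x ^ 2) :=
      mul_le_mul_of_nonneg_left (by linarith) (by positivity)
    have key2 : 500 * (x ^ 2 + y ^ 2) ^ 2 ≤ 3721 * b ^ 2 * (y ^ 2 - x ^ 2) := by
      linarith [hprod, hmul]
    have hcast : (-(1 / (Real.pi : ℂ))) = ((-(1 / Real.pi) : ℝ) : ℂ) := by push_cast; ring
    have hu2re : ((z - (starRingEnd ℂ) w) ^ 2).re = x ^ 2 - y ^ 2 := by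
      rw [sq, Complex.mul_re, hre, him]; ring
    have hu2ns : Complex.normSq ((z - (starRingEnd ℂ) w) ^ 2) = (x ^ 2 + y ^ 2) ^ 2 := by
      rw [map_pow, Complex.normSq_apply, hre, him]; ring
    rw [hcast, Complex.re_ofReal_mul, one_div ((z - (starRingEnd ℂ) w) ^ 2),
      Complex.inv_re, hu2re, hu2ns]
    have h1 : (x ^ 2 - y ^ 2) / (x ^ 2 + y ^ 2) ^ 2 ≤ -(500 / (3721 * b ^ 2)) := by
      rw [div_le_iff₀ (by positivity : (0:ℝ) < (x ^ 2 + y ^ 2) ^ 2)]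
      have heq : -(500 / (3721 * b ^ 2)) * (x ^ 2 + y ^ 2) ^ 2
          = -(500 * (x ^ 2 + y ^ 2) ^ 2) / (3721 * b ^ 2) := by ring
      rw [heq, le_div_iff₀ (by positivity : (0:ℝ) < 3721 * b ^ 2)]
      nlinarith [key2]
    calc 500 / (3721 * Real.pi * b ^ 2)
        = -(1 / Real.pi) * (-(500 / (3721 * b ^ 2))) := by
          field_simp
      _ ≤ -(1 / Real.pi) * ((x ^ 2 - y ^ 2) / (x ^ 2 + y ^ 2) ^ 2) :=
          mul_le_mul_of_nonpos_left h1 (neg_nonpos.mpr (by positivity))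
  refine ⟨Metric.closedBall τ r, hKsub, isCompact_closedBall τ r,
    Metric.ball_subset_interior_closedBall (Metric.mem_ball_self hr),
    500 / (3721 * Real.pi * b ^ 2), by positivity, ?_⟩
  intro E hE hEK z hz
  -- the kernel as a function of w
  set g : ℂ → ℂ := fun w => -(1 / (Real.pi : ℂ)) * (1 / (z - (starRingEnd ℂ) w) ^ 2) with hgdef
  have hne : ∀ w ∈ Metric.closedBall τ r, (z - (starRingEnd ℂ) w) ^ 2 ≠ 0 := by
    intro w hw
    apply pow_ne_zero
    intro h0
    have : (z - (starRingEnd ℂ) w).im = 0 := by rw [h0]; simp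
    have him : (z - (starRingEnd ℂ) w).im = z.im + w.im := by simp
    have hz' := hKsub hz
    have hw' := hKsub hw
    have : z.im + w.im = 0 := by rw [← him, this]
    exact absurd this (by have : 0 < z.im + w.im := add_pos hz' hw'; linarith)
  have hcont : ContinuousOn g (Metric.closedBall τ r) := by
    apply ContinuousOn.mul continuousOn_const
    apply ContinuousOn.div continuousOn_const
    · exact ((continuous_const.sub Complex.continuous_conj).pow 2).continuousOn
    · exact hne
  have hgint : IntegrableOn g E volume :=
    (hcont.integrableOn_compact (isCompact_closedBall τ r)).mono_set hEK
  have hμE : volume E ≠ ⊤ :=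
    ne_of_lt (lt_of_le_of_lt (measure_mono hEK) (isCompact_closedBall τ r).measure_lt_top)
  -- rewrite the Bergman projection as an integral over E
  have hrw : bergmanUHP (E.indicator fun _ => (1 : ℂ)) z = ∫ w in E, g w := by
    rw [bergmanUHP]
    have h1 : ∀ w, (E.indicator fun _ => (1:ℂ)) w / (z - (starRingEnd ℂ) w) ^ 2
        = E.indicator (fun w => 1 / (z - (starRingEnd ℂ) w) ^ 2) w := by
      intro w
      by_cases hw : w ∈ E <;> simp [Set.indicator_of_mem, Set.indicator_of_notMem, hw]
    simp_rw [h1]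
    rw [setIntegral_indicator hE, Set.inter_eq_self_of_subset_right (hEK.trans hKsub),
      ← integral_const_mul]
  rw [hrw]
  have hre : (∫ w in E, g w).re = ∫ w in E, (g w).re := (integral_re hgint).symm
  rw [hre]
  exact setIntegral_ge_of_const_le_real hE hμE
    (fun w hw => hpoint z hz w (hEK hw)) hgint.re

end
end

section
/- Let α ∈ ℝ, β > 0 and 0 < γ < β, and let K = { x + iy ∈ ℂ : α − (β−γ)/2 ≤ x ≤ α + (β−γ)/2 and β − γ ≤ y ≤ β + γ }. Then there exists a constant c > 0 such that −(1/π)·Re(1/(z − w̄)²) ≥ c for all z, w ∈ K. -/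
open Complex

set_option maxHeartbeats 1000000 in
theorem kernel_lower_bound_on_rectangle (α β γ : ℝ) (hβ : 0 < β) (hγ0 : 0 < γ) (hγβ : γ < β)
    (K : Set ℂ)
    (hK : K = {z : ℂ | α - (β - γ) / 2 ≤ z.re ∧ z.re ≤ α + (β - γ) / 2 ∧
      β - γ ≤ z.im ∧ z.im ≤ β + γ}) :
    ∃ c : ℝ, 0 < c ∧ ∀ z ∈ K, ∀ w ∈ K,
      c ≤ -(1 / Real.pi) * (1 / (z - (starRingEnd ℂ) w) ^ 2).re := by
  have hd0 : 0 < β - γ := by linarith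
  set d := β - γ with hd
  have hπ : 0 < Real.pi := Real.pi_pos
  refine ⟨3 * d ^ 2 / (Real.pi * (d ^ 2 + 4 * (β + γ) ^ 2) ^ 2), by positivity, ?_⟩
  intro z hz w hw
  rw [hK] at hz hw
  obtain ⟨hz1, hz2, hz3, hz4⟩ := hz
  obtain ⟨hw1, hw2, hw3, hw4⟩ := hw
  set x := z.re - w.re with hx
  set y := z.im + w.im with hy
  have hu_re : (z - (starRingEnd ℂ) w).re = x := by simp [hx]
  have hu_im : (z - (starRingEnd ℂ) w).im = y := by simp [hy, add_comm]
  have h2 : 2 * d ≤ y := by simp [hy, hd]; linarith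
  have h3 : y ≤ 2 * (β + γ) := by simp [hy]; linarith
  have h1 : x ^ 2 ≤ d ^ 2 := by nlinarith
  have hden : 0 < x ^ 2 + y ^ 2 := by nlinarith
  have key : (1 / (z - (starRingEnd ℂ) w) ^ 2).re = (x ^ 2 - y ^ 2) / (x ^ 2 + y ^ 2) ^ 2 := by
    rw [one_div, Complex.inv_re, map_pow, sq, Complex.mul_re, Complex.normSq_apply,
      hu_re, hu_im]
    ring
  rw [key]
  have hEq : -(1 / Real.pi) * ((x ^ 2 - y ^ 2) / (x ^ 2 + y ^ 2) ^ 2)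
      = (y ^ 2 - x ^ 2) / (Real.pi * (x ^ 2 + y ^ 2) ^ 2) := by
    field_simp
    ring
  rw [hEq, div_le_div_iff₀ (by positivity) (by positivity)]
  have hA : 3 * d ^ 2 ≤ y ^ 2 - x ^ 2 := by nlinarith
  have hB : x ^ 2 + y ^ 2 ≤ d ^ 2 + 4 * (β + γ) ^ 2 := by nlinarith
  have hC : (x ^ 2 + y ^ 2) ^ 2 ≤ (d ^ 2 + 4 * (β + γ) ^ 2) ^ 2 :=
    pow_le_pow_left₀ hden.le hB 2
  have final : 3 * d ^ 2 * (x ^ 2 + y ^ 2) ^ 2 ≤ (y ^ 2 - x ^ 2) * (d ^ 2 + 4 * (β + γ) ^ 2) ^ 2 :=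
    mul_le_mul hA hC (by positivity) (by nlinarith)
  calc 3 * d ^ 2 * (Real.pi * (x ^ 2 + y ^ 2) ^ 2)
      = Real.pi * (3 * d ^ 2 * (x ^ 2 + y ^ 2) ^ 2) := by ring
    _ ≤ Real.pi * ((y ^ 2 - x ^ 2) * (d ^ 2 + 4 * (β + γ) ^ 2) ^ 2) :=
        mul_le_mul_of_nonneg_left final hπ.le
    _ = (y ^ 2 - x ^ 2) * (Real.pi * (d ^ 2 + 4 * (β + γ) ^ 2) ^ 2) := by ring
end

section
/- Let p : ℝ²₊ → [1,∞) be a measurable variable exponent with 1 < ess inf_{z∈ℝ²₊} p(z) and ess sup_{z∈ℝ²₊} p(z) < ∞. Suppose there is a constant C > 0 such that the modular inequality ∫_{ℝ²₊} |B_{ℝ²₊}f(z)|^{p(z)} dA(z) ≤ C ∫_{ℝ²₊} |f(z)|^{p(z)} dA(z) holds for every measurable f : ℝ²₊ → ℂ with ∫_{ℝ²₊} |f(z)|^{p(z)} dA(z) < ∞ and such that w ↦ f(w)/(z − w̄)² is Lebesgue integrable on ℝ²₊ for every z ∈ ℝ²₊. Then there exists a constant c such that p(z) = c for almost every z ∈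 ℝ²₊. -/
open MeasureTheory Complex Set

noncomputable section

lemma upperHalf_meas : MeasurableSet upperHalf :=
  measurableSet_lt measurable_const Complex.measurable_im

lemma isOpen_upperHalf : IsOpen upperHalf :=
  isOpen_lt continuous_const Complex.continuous_im

lemma upperHalf_pos : 0 < volume upperHalf :=
  isOpen_upperHalf.measure_pos volume ⟨Complex.I, by simp [upperHalf]⟩

lemma exists_pos_ball {s : Set ℂ} (hs : MeasurableSet s) (hfin : volume s ≠ ⊤)
    (hpos : volume s ≠ 0) : ∃ x ∈ s, ∀ r > 0, 0 < volume (s ∩ Metric.ball x r) := by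
  have hae := MeasureTheory.Measure.everywherePosSubset_ae_eq_of_measure_ne_top
    (μ := (volume : Measure ℂ)) hs hfin
  have hme : volume (volume.everywherePosSubset s) = volume s := measure_congr hae
  have : (volume.everywherePosSubset s).Nonempty := by
    rw [Set.nonempty_iff_ne_empty]
    intro h
    rw [h] at hme
    simp at hme
    exact hpos hme.symm
  obtain ⟨x, hx1, hx2⟩ := this
  refine ⟨x, hx1, fun r hr => ?_⟩
  have : s ∩ Metric.ball x r ∈ nhdsWithin x s :=
    inter_mem_nhdsWithin s (Metric.ball_mem_nhds x hr)
  exact hx2 _ this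

/-- From a positive-measure subset of the upper half-plane, extract a positive finite-measure
subset staying at distance `δ` above the real axis. -/
lemma exists_good_subset {s : Set ℂ} (hs : MeasurableSet s) (hsub : s ⊆ upperHalf)
    (hpos : 0 < volume s) :
    ∃ δ : ℝ, 0 < δ ∧ ∃ t : Set ℂ, MeasurableSet t ∧ t ⊆ s ∧ 0 < volume t ∧
      volume t ≠ ⊤ ∧ ∀ z ∈ t, δ ≤ z.im := by
  set g : ℕ → Set ℂ := fun n => s ∩ {z | 1/(n+1 : ℝ) ≤ z.im} ∩ Metric.ball 0 (n+1) with hg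
  have hcover : s ⊆ ⋃ n : ℕ, g n := by
    intro z hz
    have him : 0 < z.im := hsub hz
    obtain ⟨n, hn⟩ := exists_nat_gt (max (1/z.im) ‖z‖)
    have h1 : 1/(n+1 : ℝ) ≤ z.im := by
      rw [div_le_iff₀ (by positivity)]
      have : 1/z.im < n := lt_of_le_of_lt (le_max_left _ _) hn
      rw [div_lt_iff₀ him] at this
      nlinarith
    have h2 : z ∈ Metric.ball (0:ℂ) (n+1) := by
      have : ‖z‖ < n := lt_of_le_of_lt (le_max_right _ _) hn
      simp only [Metric.mem_ball, Complex.dist_eq, sub_zero]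
      linarith
    exact Set.mem_iUnion.mpr ⟨n, ⟨⟨hz, h1⟩, h2⟩⟩
  have : ∃ n : ℕ, volume (g n) ≠ 0 := by
    by_contra h
    push_neg at h
    exact absurd (measure_mono_null hcover (measure_iUnion_null h))
      (pos_iff_ne_zero.mp hpos)
  obtain ⟨n, hn⟩ := this
  have hgm : MeasurableSet (g n) :=
    ((hs.inter (measurableSet_le measurable_const Complex.measurable_im)).inter
      measurableSet_ball)
  refine ⟨1/(n+1 : ℝ), by positivity, g n, hgm, ?_, pos_iff_ne_zero.mpr hn, ?_, ?_⟩
  · intro z hz; exact hz.1.1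
  · exact ne_top_of_le_ne_top measure_ball_lt_top.ne
      (measure_mono (Set.inter_subset_right))
  · intro z hz; exact hz.1.2

lemma dichotomy (p : ℂ → ℝ) (hpm : Measurable p) (hp1 : ∀ z ∈ upperHalf, 1 ≤ p z)
    (hsup : ∃ M : ℝ, ∀ᵐ z ∂(volume.restrict upperHalf), p z ≤ M)
    (hcon : ¬ ∃ c : ℝ, ∀ᵐ z ∂(volume.restrict upperHalf), p z = c) :
    ∃ α β : ℝ, α < β ∧ 0 < volume (upperHalf ∩ {z | p z ≤ α}) ∧
      0 < volume (upperHalf ∩ {z | β ≤ p z}) := by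
  by_contra h2
  push_neg at h2
  set E : ℝ → Set ℂ := fun x => upperHalf ∩ {z | p z ≤ x} with hE
  set F : ℝ → Set ℂ := fun x => upperHalf ∩ {z | x ≤ p z} with hF
  have dich : ∀ α β : ℝ, α < β → volume (E α) = 0 ∨ volume (F β) = 0 := by
    intro α β hab
    by_cases hEα : volume (E α) = 0
    · exact Or.inl hEα
    · right
      have := h2 α β hab (pos_iff_ne_zero.mpr hEα)
      exact le_zero_iff.mp this
  set T : Set ℝ := {x | volume (E x) = 0} with hT
  have h0T : (0:ℝ) ∈ T := by
    have : E 0 ⊆ (∅ : Set ℂ) := by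
      rintro z ⟨hU, hle⟩
      exact absurd (le_trans (hp1 z hU) hle) (by norm_num)
    simpa [hT] using measure_mono_null this (by simp)
  obtain ⟨M, hM⟩ := hsup
  have hMnull : volume (upperHalf ∩ {z | M < p z}) = 0 := by
    have : (volume.restrict upperHalf) {z | M < p z} = 0 := by
      rw [← nonpos_iff_eq_zero]
      refine le_trans (measure_mono ?_) (le_of_eq (ae_iff.mp hM))
      intro z hz; simpa using not_le.mpr hz
    rwa [Measure.restrict_apply (measurableSet_lt measurable_const hpm), inter_comm] at this
  have Tbdd : BddAbove T := by
    refine ⟨M, fun x hx => ?_⟩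
    by_contra hxM
    push_neg at hxM
    have hcover : upperHalf ⊆ E x ∪ (upperHalf ∩ {z | M < p z}) := by
      intro z hz
      rcases le_or_gt (p z) x with h | h
      · exact Or.inl ⟨hz, h⟩
      · exact Or.inr ⟨hz, lt_trans hxM h⟩
    have : volume upperHalf = 0 :=
      measure_mono_null hcover (measure_union_null hx hMnull)
    exact absurd this (pos_iff_ne_zero.mp upperHalf_pos)
  have hTne : T.Nonempty := ⟨0, h0T⟩
  set c : ℝ := sSup T with hc
  have hlt : volume (upperHalf ∩ {z | p z < c}) = 0 := by
    have hsub : upperHalf ∩ {z | p z < c} ⊆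
        ⋃ q : ℚ, (if (q:ℝ) < c then E q else ∅) := by
      rintro z ⟨hU, hz⟩
      simp only [Set.mem_setOf_eq] at hz
      obtain ⟨q, hq1, hq2⟩ := exists_rat_btwn hz
      refine Set.mem_iUnion.mpr ⟨q, ?_⟩
      rw [if_pos hq2]
      exact ⟨hU, le_of_lt hq1⟩
    refine measure_mono_null hsub (measure_iUnion_null fun q => ?_)
    split_ifs with hq
    · obtain ⟨t, htT, hqt⟩ := exists_lt_of_lt_csSup hTne hq
      refine measure_mono_null ?_ htT
      rintro z ⟨h1, h2⟩
      exact ⟨h1, le_trans h2 (le_of_lt hqt)⟩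
    · simp
  have hgt : volume (upperHalf ∩ {z | c < p z}) = 0 := by
    have hsub : upperHalf ∩ {z | c < p z} ⊆
        ⋃ q : ℚ, (if c < (q:ℝ) then F q else ∅) := by
      rintro z ⟨hU, hz⟩
      simp only [Set.mem_setOf_eq] at hz
      obtain ⟨q, hq1, hq2⟩ := exists_rat_btwn hz
      refine Set.mem_iUnion.mpr ⟨q, ?_⟩
      rw [if_pos hq1]
      exact ⟨hU, le_of_lt hq2⟩
    refine measure_mono_null hsub (measure_iUnion_null fun q => ?_)
    split_ifs with hq
    · set γ : ℝ := (c + q)/2 with hγ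
      have hγ1 : c < γ := by rw [hγ]; linarith
      have hγ2 : γ < q := by rw [hγ]; linarith
      have hγT : γ ∉ T := fun h => absurd (le_csSup Tbdd h) (not_le.mpr hγ1)
      rcases dich γ q hγ2 with h | h
      · exact absurd h hγT
      · exact h
    · simp
  apply hcon
  refine ⟨c, ?_⟩
  rw [ae_restrict_iff' upperHalf_meas, ae_iff]
  refine measure_mono_null (fun z hz => ?_) (measure_union_null hlt hgt)
  simp only [Set.mem_setOf_eq, not_forall] at hz
  push_neg at hz
  obtain ⟨hU, hne⟩ := hz
  rcases lt_or_gt_of_ne hne with h | h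
  · exact Or.inl ⟨hU, h⟩
  · exact Or.inr ⟨hU, h⟩

theorem modular_inequality_bergmanUHP_implies_constant_exponent
    (p : ℂ → ℝ) (hpm : Measurable p)
    (hp1 : ∀ z ∈ upperHalf, 1 ≤ p z)
    (hinf : 1 < essInf p (volume.restrict upperHalf))
    (hsup : ∃ M : ℝ, ∀ᵐ z ∂(volume.restrict upperHalf), p z ≤ M)
    (C : ℝ) (hC : 0 < C)
    (hmod : ∀ f : ℂ → ℂ, Measurable f →
      (∫⁻ z in upperHalf, ENNReal.ofReal (‖f z‖ ^ p z)) < ⊤ →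
      (∀ z ∈ upperHalf,
        IntegrableOn (fun w => f w / (z - (starRingEnd ℂ) w) ^ 2) upperHalf) →
      (∫⁻ z in upperHalf, ENNReal.ofReal (‖bergmanUHP f z‖ ^ p z))
        ≤ ENNReal.ofReal C *
          ∫⁻ z in upperHalf, ENNReal.ofReal (‖f z‖ ^ p z)) :
    ∃ c : ℝ, ∀ᵐ z ∂(volume.restrict upperHalf), p z = c := by
  by_contra hcon
  obtain ⟨α, β, hαβ, hA, hB⟩ := dichotomy p hpm hp1 hsup hcon
  -- extract good subsets
  have hAmeas : MeasurableSet (upperHalf ∩ {z | p z ≤ α}) :=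
    upperHalf_meas.inter (measurableSet_le hpm measurable_const)
  have hBmeas : MeasurableSet (upperHalf ∩ {z | β ≤ p z}) :=
    upperHalf_meas.inter (measurableSet_le measurable_const hpm)
  obtain ⟨δ0, hδ0, t0, ht0m, ht0sub, ht0pos, ht0fin, ht0im⟩ :=
    exists_good_subset hAmeas Set.inter_subset_left hA
  obtain ⟨δ1, hδ1, t1, ht1m, ht1sub, ht1pos, ht1fin, ht1im⟩ :=
    exists_good_subset hBmeas Set.inter_subset_left hB
  obtain ⟨z0, hz0t, hz0ball⟩ := exists_pos_ball ht0m ht0fin (pos_iff_ne_zero.mp ht0pos)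
  obtain ⟨z1, hz1t, hz1ball⟩ := exists_pos_ball ht1m ht1fin (pos_iff_ne_zero.mp ht1pos)
  have hz0im : 0 < z0.im := lt_of_lt_of_le hδ0 (ht0im z0 hz0t)
  have hz1im : 0 < z1.im := lt_of_lt_of_le hδ1 (ht1im z1 hz1t)
  -- the kernel at the pair of density points
  have hden : z1 - (starRingEnd ℂ) z0 ≠ 0 := by
    intro h
    have : (z1 - (starRingEnd ℂ) z0).im = 0 := by rw [h]; simp
    rw [Complex.sub_im, Complex.conj_im] at this
    linarith
  set κ : ℂ := ((z1 - (starRingEnd ℂ) z0) ^ 2)⁻¹ with hκdef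
  have hκ : κ ≠ 0 := inv_ne_zero (pow_ne_zero 2 hden)
  set ε : ℝ := ‖κ‖ / 2 with hεdef
  have hε : 0 < ε := by
    have := norm_pos_iff.mpr hκ
    positivity
  -- continuity of the kernel at (z1, z0)
  set Φ : ℂ × ℂ → ℂ := fun q => ((q.1 - (starRingEnd ℂ) q.2) ^ 2)⁻¹ with hΦdef
  have hΦcont : ContinuousAt Φ (z1, z0) := by
    apply ContinuousAt.inv₀
    · exact ((continuous_fst.sub (Complex.continuous_conj.comp continuous_snd)).pow 2).continuousAt
    · exact pow_ne_zero 2 hden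
  obtain ⟨r, hr, hker⟩ := Metric.continuousAt_iff.mp hΦcont ε hε
  -- kernel estimates on the product of balls
  have hkerest : ∀ z ∈ Metric.ball z1 r, ∀ w ∈ Metric.ball z0 r,
      ‖Φ (z, w) - κ‖ ≤ ε := by
    intro z hz w hw
    have hd : dist ((z, w) : ℂ × ℂ) (z1, z0) < r := by
      rw [Prod.dist_eq]
      exact max_lt hz hw
    have := hker hd
    rw [Complex.dist_eq] at this
    exact le_of_lt this
  -- the test sets
  set S : Set ℂ := t0 ∩ Metric.ball z0 r with hSdef
  set T : Set ℂ := t1 ∩ Metric.ball z1 r with hTdef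
  have hSmeas : MeasurableSet S := ht0m.inter measurableSet_ball
  have hTmeas : MeasurableSet T := ht1m.inter measurableSet_ball
  have hSpos : 0 < volume S := hz0ball r hr
  have hTpos : 0 < volume T := hz1ball r hr
  have hSfin : volume S ≠ ⊤ := ne_top_of_le_ne_top ht0fin (measure_mono Set.inter_subset_left)
  have hTfin : volume T ≠ ⊤ := ne_top_of_le_ne_top ht1fin (measure_mono Set.inter_subset_left)
  set s' : ℝ := (volume S).toReal with hs'def
  set t' : ℝ := (volume T).toReal with ht'def
  have hs'pos : 0 < s' := ENNReal.toReal_pos (pos_iff_ne_zero.mp hSpos) hSfin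
  have ht'pos : 0 < t' := ENNReal.toReal_pos (pos_iff_ne_zero.mp hTpos) hTfin
  have hSU : S ⊆ upperHalf := fun z hz => (ht0sub hz.1).1
  have hTU : T ⊆ upperHalf := fun z hz => (ht1sub hz.1).1
  have hSp : ∀ z ∈ S, p z ≤ α := fun z hz => (ht0sub hz.1).2
  have hTp : ∀ z ∈ T, β ≤ p z := fun z hz => (ht1sub hz.1).2
  set m : ℝ := ε * s' / Real.pi with hmdef
  have hm : 0 < m := by
    have := Real.pi_pos
    positivity
  -- the key inequality for every large parameter a
  have key : ∀ a : ℝ, 1 ≤ a → 1 ≤ a * m →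
      (a * m) ^ β * t' ≤ C * (a ^ α * s') := by
    intro a ha1 ham
    have ha0 : 0 < a := lt_of_lt_of_le one_pos ha1
    set f : ℂ → ℂ := S.indicator (fun _ => (a : ℂ)) with hfdef
    have hfm : Measurable f := measurable_const.indicator hSmeas
    -- modular of f
    have hmodf : (∫⁻ z in upperHalf, ENNReal.ofReal (‖f z‖ ^ p z))
        ≤ ENNReal.ofReal (a ^ α) * volume S := by
      have hbound : ∀ z ∈ upperHalf, ENNReal.ofReal (‖f z‖ ^ p z)
          ≤ S.indicator (fun _ => ENNReal.ofReal (a ^ α)) z := by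
        intro z hz
        by_cases hzS : z ∈ S
        · rw [Set.indicator_of_mem hzS, hfdef, Set.indicator_of_mem hzS]
          apply ENNReal.ofReal_le_ofReal
          rw [Complex.norm_of_nonneg ha0.le]
          exact Real.rpow_le_rpow_of_exponent_le ha1 (hSp z hzS)
        · rw [Set.indicator_of_notMem hzS, hfdef, Set.indicator_of_notMem hzS]
          simp only [norm_zero]
          rw [Real.zero_rpow (by linarith [hp1 z hz] : p z ≠ 0)]
          simp
      calc (∫⁻ z in upperHalf, ENNReal.ofReal (‖f z‖ ^ p z))
          ≤ ∫⁻ z in upperHalf, S.indicator (fun _ => ENNReal.ofReal (a ^ α)) z :=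
            setLIntegral_mono (measurable_const.indicator hSmeas) hbound
        _ ≤ ∫⁻ z, S.indicator (fun _ => ENNReal.ofReal (a ^ α)) z :=
            setLIntegral_le_lintegral _ _
        _ = ENNReal.ofReal (a ^ α) * volume S := lintegral_indicator_const hSmeas _
    have hfin : (∫⁻ z in upperHalf, ENNReal.ofReal (‖f z‖ ^ p z)) < ⊤ :=
      lt_of_le_of_lt hmodf (ENNReal.mul_lt_top ENNReal.ofReal_lt_top hSfin.lt_top)
    -- rewriting the integrand as an indicator
    have heqf : ∀ z : ℂ, (fun w => f w / (z - (starRingEnd ℂ) w) ^ 2)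
        = S.indicator (fun w => (a : ℂ) / (z - (starRingEnd ℂ) w) ^ 2) := by
      intro z
      funext w
      by_cases hw : w ∈ S
      · rw [hfdef]
        simp [Set.indicator_of_mem hw]
      · rw [hfdef]
        simp [Set.indicator_of_notMem hw]
    have hgmeas : ∀ z : ℂ, Measurable (fun w => (a : ℂ) / (z - (starRingEnd ℂ) w) ^ 2) := by
      intro z
      exact measurable_const.div
        ((measurable_const.sub Complex.continuous_conj.measurable).pow_const 2)
    -- integrability of the kernel over S
    have hSint : ∀ z ∈ upperHalf,
        IntegrableOn (fun w => (a : ℂ) / (z - (starRingEnd ℂ) w) ^ 2) S := by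
      intro z hz
      have hzim : 0 < z.im := hz
      have hbnd : ∀ w ∈ S, ‖(a : ℂ) / (z - (starRingEnd ℂ) w) ^ 2‖ ≤ a / z.im ^ 2 := by
        intro w hw
        have hwim : 0 < w.im := hSU hw
        have habs : z.im ≤ ‖z - (starRingEnd ℂ) w‖ := by
          have h1 : (z - (starRingEnd ℂ) w).im = z.im + w.im := by
            rw [Complex.sub_im, Complex.conj_im]; ring
          have h2 := Complex.abs_im_le_norm (z - (starRingEnd ℂ) w)
          rw [h1] at h2
          rw [abs_of_pos (by linarith)] at h2
          linarith
        have h3 : z.im ^ 2 ≤ ‖z - (starRingEnd ℂ) w‖ ^ 2 := by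
          apply pow_le_pow_left₀ hzim.le habs
        rw [norm_div, norm_pow, Complex.norm_of_nonneg ha0.le]
        exact div_le_div_of_nonneg_left ha0.le (by positivity) h3
      refine Integrable.mono' (g := fun _ => a / z.im ^ 2)
        ((integrableOn_const_iff (by simp)).mpr (Or.inr hSfin.lt_top))
        ((hgmeas z).aestronglyMeasurable) ?_
      rw [ae_restrict_iff' hSmeas]
      exact Filter.Eventually.of_forall hbnd
    -- integrability hypothesis of hmod
    have hint : ∀ z ∈ upperHalf,
        IntegrableOn (fun w => f w / (z - (starRingEnd ℂ) w) ^ 2) upperHalf := by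
      intro z hz
      rw [heqf z]
      exact ((hSint z hz).integrable_indicator hSmeas).integrableOn
    have hineq := hmod f hfm hfin hint
    -- lower bound for the left-hand side
    have hptw : ∀ z ∈ T, ENNReal.ofReal ((a * m) ^ β)
        ≤ ENNReal.ofReal (‖bergmanUHP f z‖ ^ p z) := by
      intro z hzT
      have hzU : z ∈ upperHalf := hTU hzT
      have hzball : z ∈ Metric.ball z1 r := hzT.2
      set g : ℂ → ℂ := fun w => (a : ℂ) / (z - (starRingEnd ℂ) w) ^ 2 with hgdef
      have habsB : a * m ≤ ‖bergmanUHP f z‖ := by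
        have hJ : (∫ w in upperHalf, f w / (z - (starRingEnd ℂ) w) ^ 2)
            = ∫ w in S, g w := by
          rw [heqf z, setIntegral_indicator hSmeas,
            Set.inter_eq_self_of_subset_right hSU]
        have hgint : IntegrableOn g S := hSint z hzU
        set c0 : ℂ := (a : ℂ) * κ with hc0def
        have hker2 : ∀ w ∈ S, ‖g w - c0‖ ≤ a * ε := by
          intro w hw
          have hΦw : ‖Φ (z, w) - κ‖ ≤ ε := hkerest z hzball w hw.2
          have hgw : g w = (a : ℂ) * Φ (z, w) := by
            rw [hgdef, hΦdef]
            simp [div_eq_mul_inv]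
          rw [hgw, hc0def, ← mul_sub, norm_mul, Complex.norm_of_nonneg ha0.le]
          exact mul_le_mul_of_nonneg_left hΦw ha0.le
        have hsubnorm : ‖(∫ w in S, g w) - s' • c0‖ ≤ a * ε * s' := by
          rw [hs'def, ← measureReal_def, ← setIntegral_const, ← integral_sub hgint
            ((integrableOn_const_iff (by simp)).mpr (Or.inr hSfin.lt_top))]
          exact norm_setIntegral_le_of_norm_le_const hSfin.lt_top hker2
        have hnormc0 : ‖s' • c0‖ = s' * (a * ‖κ‖) := by
          rw [norm_smul, hc0def, norm_mul, Complex.norm_of_nonneg ha0.le,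
            Real.norm_eq_abs, abs_of_pos hs'pos]
        have hJlow : a * ε * s' ≤ ‖∫ w in S, g w‖ := by
          have htri : ‖s' • c0‖ - ‖∫ w in S, g w‖ ≤ ‖(∫ w in S, g w) - s' • c0‖ := by
            rw [norm_sub_rev]
            exact norm_sub_norm_le _ _
          have hκ2ε : ‖κ‖ = 2 * ε := by rw [hεdef]; ring
          rw [hnormc0, hκ2ε] at htri
          nlinarith [hsubnorm]
        have habseq : ‖bergmanUHP f z‖
            = (1 / Real.pi) * ‖∫ w in S, g w‖ := by
          rw [bergmanUHP, hJ, norm_mul]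
          congr 1
          rw [norm_neg, norm_div, Complex.norm_of_nonneg Real.pi_pos.le]
          simp [abs_of_pos Real.pi_pos]
        rw [habseq]
        calc a * m = (1 / Real.pi) * (a * ε * s') := by rw [hmdef]; field_simp
          _ ≤ (1 / Real.pi) * ‖∫ w in S, g w‖ := by
              apply mul_le_mul_of_nonneg_left hJlow
              positivity
      have h1 : (a * m) ^ β ≤ (a * m) ^ (p z) :=
        Real.rpow_le_rpow_of_exponent_le ham (hTp z hzT)
      have h2 : (a * m) ^ (p z) ≤ (‖bergmanUHP f z‖) ^ (p z) :=
        Real.rpow_le_rpow (by positivity) habsB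
          (le_trans zero_le_one (hp1 z hzU))
      exact ENNReal.ofReal_le_ofReal (le_trans h1 h2)
    have hlow : ENNReal.ofReal ((a * m) ^ β) * volume T
        ≤ ∫⁻ z in upperHalf, ENNReal.ofReal (‖bergmanUHP f z‖ ^ p z) := by
      calc ENNReal.ofReal ((a * m) ^ β) * volume T
          = ∫⁻ _ in T, ENNReal.ofReal ((a * m) ^ β) := (setLIntegral_const _ _).symm
        _ ≤ ∫⁻ z in T, ENNReal.ofReal (‖bergmanUHP f z‖ ^ p z) := by
            apply lintegral_mono_ae
            rw [ae_restrict_iff' hTmeas]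
            exact Filter.Eventually.of_forall hptw
        _ ≤ ∫⁻ z in upperHalf, ENNReal.ofReal (‖bergmanUHP f z‖ ^ p z) :=
            lintegral_mono' (Measure.restrict_mono hTU le_rfl) le_rfl
    have hcomb : ENNReal.ofReal ((a * m) ^ β) * volume T
        ≤ ENNReal.ofReal C * (ENNReal.ofReal (a ^ α) * volume S) :=
      le_trans hlow (le_trans hineq (mul_le_mul_right hmodf _))
    have hRne : ENNReal.ofReal C * (ENNReal.ofReal (a ^ α) * volume S) ≠ ⊤ :=
      ENNReal.mul_ne_top ENNReal.ofReal_ne_top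
        (ENNReal.mul_ne_top ENNReal.ofReal_ne_top hSfin)
    have := ENNReal.toReal_mono hRne hcomb
    rw [ENNReal.toReal_mul, ENNReal.toReal_mul, ENNReal.toReal_mul,
      ENNReal.toReal_ofReal (Real.rpow_nonneg (by positivity) _),
      ENNReal.toReal_ofReal hC.le,
      ENNReal.toReal_ofReal (Real.rpow_nonneg ha0.le _)] at this
    exact this
  -- choose the parameter a large enough to derive a contradiction
  have hβα : 0 < β - α := sub_pos.mpr hαβ
  set K : ℝ := (C * s') / (m ^ β * t') with hKdef
  have hmβ : 0 < m ^ β := Real.rpow_pos_of_pos hm β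
  have hK0 : 0 < K := by positivity
  set a : ℝ := max (max 1 (1/m)) ((K + 1) ^ (1/(β - α))) with hadef
  have ha1 : 1 ≤ a := le_trans (le_max_left _ _) (le_max_left _ _)
  have ha0 : 0 < a := lt_of_lt_of_le one_pos ha1
  have ham : 1 ≤ a * m := by
    have h1m : 1/m ≤ a := le_trans (le_max_right _ _) (le_max_left _ _)
    rwa [div_le_iff₀ hm] at h1m
  have hkey := key a ha1 ham
  have hkey' : a ^ β * m ^ β * t' ≤ C * (a ^ α * s') := by
    rw [← Real.mul_rpow ha0.le hm.le]
    exact hkey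
  have hle : a ^ (β - α) ≤ K := by
    rw [Real.rpow_sub ha0, hKdef,
      div_le_div_iff₀ (Real.rpow_pos_of_pos ha0 α) (by positivity)]
    calc a ^ β * (m ^ β * t') = a ^ β * m ^ β * t' := by ring
      _ ≤ C * (a ^ α * s') := hkey'
      _ = C * s' * a ^ α := by ring
  have hge : K + 1 ≤ a ^ (β - α) := by
    have haa : (K + 1) ^ (1/(β - α)) ≤ a := le_max_right _ _
    calc K + 1 = ((K + 1) ^ (1/(β - α))) ^ (β - α) := by
          rw [← Real.rpow_mul (by linarith : (0:ℝ) ≤ K + 1),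
            one_div_mul_cancel hβα.ne', Real.rpow_one]
      _ ≤ a ^ (β - α) := Real.rpow_le_rpow (by positivity) haa hβα.le
  linarith

end
end

section
/- Let n ≥ 2 and let p : ℝⁿ₊ → [1,∞) be a measurable variable exponent with 1 < ess inf_{x∈ℝⁿ₊} p(x) and ess sup_{x∈ℝⁿ₊} p(x) < ∞. Suppose there is a constant C > 0 such that the modular inequality ∫_{ℝⁿ₊} |b_{ℝⁿ₊}f(x)|^{p(x)} dx ≤ C ∫_{ℝⁿ₊} |f(x)|^{p(x)} dx holds for every measurable f : ℝⁿ₊ → ℝ with ∫_{ℝⁿ₊} |f(x)|^{p(x)} dx < ∞ and such that y ↦ R(x,y)f(y) is Lebesgue integrable on ℝⁿ₊ for every x ∈ ℝⁿ₊. Then there exists a constant c such that p(x) = c for almost every x ∈ ℝⁿ₊. -/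
open MeasureTheory Set
open scoped ENNReal NNReal

noncomputable section

/-- The last coordinate of a point of `ℝⁿ`. -/
def lastCoord {n : ℕ} (x : EuclideanSpace ℝ (Fin n)) : ℝ :=
  if h : n - 1 < n then x ⟨n - 1, h⟩ else 0

/-- Reflection in the hyperplane `xₙ = 0`: negate the last coordinate. -/
def reflectLast {n : ℕ} (y : EuclideanSpace ℝ (Fin n)) : EuclideanSpace ℝ (Fin n) :=
  WithLp.toLp 2 (fun i => if (i : ℕ) = n - 1 then -y i else y i)

/-- The open upper half-space `ℝⁿ₊`. -/
def upperHalfSpace (n : ℕ) : Set (EuclideanSpace ℝ (Fin n)) :=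
  {x | 0 < lastCoord x}

/-- The harmonic Bergman kernel of the upper half-space. -/
def harmonicKernel {n : ℕ} (x y : EuclideanSpace ℝ (Fin n)) : ℝ :=
  (2 / Real.pi ^ ((n : ℝ) / 2)) * Real.Gamma ((n : ℝ) / 2) *
    (((n : ℝ) * (lastCoord x + lastCoord y) ^ 2 - ‖x - reflectLast y‖ ^ 2) /
      ‖x - reflectLast y‖ ^ (n + 2))

/-- The harmonic Bergman projection of the upper half-space. -/
def harmonicBergman {n : ℕ} (f : EuclideanSpace ℝ (Fin n) → ℝ)
    (x : EuclideanSpace ℝ (Fin n)) : ℝ :=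
  ∫ y in upperHalfSpace n, harmonicKernel x y * f y

section Geo
variable {n : ℕ} [NeZero n]

abbrev lastIdx (n : ℕ) [NeZero n] : Fin n :=
  ⟨n - 1, Nat.sub_lt (Nat.pos_of_ne_zero (NeZero.ne n)) one_pos⟩

set_option linter.unusedSectionVars false in
lemma lastCoord_eq (x : EuclideanSpace ℝ (Fin n)) : lastCoord x = x (lastIdx n) := by
  unfold lastCoord
  rw [dif_pos ((lastIdx n).2)]

set_option linter.unusedSectionVars false in
lemma sub_reflect_apply (x y : EuclideanSpace ℝ (Fin n)) (i : Fin n) :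
    (x - reflectLast y) i = if (i : ℕ) = n - 1 then x i + y i else x i - y i := by
  by_cases h : (i : ℕ) = n - 1 <;> simp [reflectLast, h, PiLp.sub_apply, sub_neg_eq_add]

set_option linter.unusedSectionVars false in
lemma norm_sq_eq (z : EuclideanSpace ℝ (Fin n)) : ‖z‖ ^ 2 = ∑ i, z i ^ 2 := by
  rw [EuclideanSpace.norm_eq, Real.sq_sqrt (by positivity)]
  exact Finset.sum_congr rfl fun i _ => by rw [Real.norm_eq_abs, sq_abs]

/-- numerator of the kernel -/
def knum (x y : EuclideanSpace ℝ (Fin n)) : ℝ :=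
  (n : ℝ) * (lastCoord x + lastCoord y) ^ 2 - ‖x - reflectLast y‖ ^ 2

lemma norm_sub_reflect_sq (x y : EuclideanSpace ℝ (Fin n)) :
    ‖x - reflectLast y‖ ^ 2
      = (x (lastIdx n) + y (lastIdx n)) ^ 2
        + ∑ i ∈ Finset.univ.erase (lastIdx n), (x i - y i) ^ 2 := by
  rw [norm_sq_eq]
  rw [← Finset.add_sum_erase _ _ (Finset.mem_univ (lastIdx n))]
  congr 1
  · rw [sub_reflect_apply, if_pos rfl]
  · refine Finset.sum_congr rfl fun i hi => ?_
    rw [sub_reflect_apply, if_neg]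
    intro h
    exact (Finset.mem_erase.1 hi).1 (Fin.ext h)

lemma knum_eq (x y : EuclideanSpace ℝ (Fin n)) :
    knum x y = ((n : ℝ) - 1) * (x (lastIdx n) + y (lastIdx n)) ^ 2
      - ∑ i ∈ Finset.univ.erase (lastIdx n), (x i - y i) ^ 2 := by
  rw [knum, norm_sub_reflect_sq, lastCoord_eq, lastCoord_eq]
  ring

lemma le_norm_sub_reflect (x y : EuclideanSpace ℝ (Fin n))
    (hx : 0 < lastCoord x) (hy : 0 < lastCoord y) :
    lastCoord x + lastCoord y ≤ ‖x - reflectLast y‖ := by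
  have h1 : (lastCoord x + lastCoord y) ^ 2 ≤ ‖x - reflectLast y‖ ^ 2 := by
    rw [norm_sub_reflect_sq, lastCoord_eq (x := x), lastCoord_eq (x := y)]
    have : (0:ℝ) ≤ ∑ i ∈ Finset.univ.erase (lastIdx n), (x i - y i) ^ 2 := by positivity
    linarith
  have h2 : (0:ℝ) ≤ lastCoord x + lastCoord y := by linarith
  nlinarith [norm_nonneg (x - reflectLast y)]

lemma norm_sub_reflect_pos (x y : EuclideanSpace ℝ (Fin n))
    (hx : 0 < lastCoord x) (hy : 0 < lastCoord y) : 0 < ‖x - reflectLast y‖ :=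
  lt_of_lt_of_le (by linarith) (le_norm_sub_reflect x y hx hy)

/-- coefficient vector of the linear part of `knum x y1 - knum x y2` -/
def avec (y1 y2 : EuclideanSpace ℝ (Fin n)) : Fin n → ℝ := fun i =>
  if i = lastIdx n then 2 * ((n : ℝ) - 1) * (y1 i - y2 i) else 2 * (y1 i - y2 i)

lemma knum_sub (x y1 y2 : EuclideanSpace ℝ (Fin n)) :
    knum x y1 - knum x y2 = (∑ i, avec y1 y2 i * x i)
      + (((n : ℝ) - 1) * ((y1 (lastIdx n)) ^ 2 - (y2 (lastIdx n)) ^ 2)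
          - ∑ i ∈ Finset.univ.erase (lastIdx n), ((y1 i) ^ 2 - (y2 i) ^ 2)) := by
  rw [knum_eq, knum_eq,
    ← Finset.add_sum_erase _ (fun i => avec y1 y2 i * x i) (Finset.mem_univ (lastIdx n))]
  have hd : avec y1 y2 (lastIdx n)
      = 2 * ((n : ℝ) - 1) * (y1 (lastIdx n) - y2 (lastIdx n)) := if_pos rfl
  have he : (∑ i ∈ Finset.univ.erase (lastIdx n), (x i - y2 i) ^ 2)
        - ∑ i ∈ Finset.univ.erase (lastIdx n), (x i - y1 i) ^ 2
      = (∑ i ∈ Finset.univ.erase (lastIdx n), avec y1 y2 i * x i)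
        - ∑ i ∈ Finset.univ.erase (lastIdx n), ((y1 i) ^ 2 - (y2 i) ^ 2) := by
    rw [← Finset.sum_sub_distrib, ← Finset.sum_sub_distrib]
    refine Finset.sum_congr rfl fun i hi => ?_
    have : avec y1 y2 i = 2 * (y1 i - y2 i) := if_neg (Finset.mem_erase.1 hi).1
    rw [this]; ring
  rw [hd] at *
  linarith [he]

omit [NeZero n] in
lemma volume_level_set_zero (a : Fin n → ℝ) (ha : a ≠ 0) (r : ℝ) :
    volume {x : EuclideanSpace ℝ (Fin n) | ∑ i, a i * x i = r} = 0 := by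
  classical
  set f : EuclideanSpace ℝ (Fin n) →ₗ[ℝ] ℝ :=
    { toFun := fun x => ∑ i, a i * x i,
      map_add' := fun x y => by
        simp only [PiLp.add_apply, mul_add, Finset.sum_add_distrib],
      map_smul' := fun c x => by
        simp only [PiLp.smul_apply, smul_eq_mul, RingHom.id_apply, Finset.mul_sum]
        exact Finset.sum_congr rfl fun i _ => by ring } with hf
  obtain ⟨j, hj⟩ := Function.ne_iff.1 ha
  have hsingle : ∀ (c : ℝ), f (EuclideanSpace.single j c) = a j * c := by
    intro c
    simp only [hf, LinearMap.coe_mk, AddHom.coe_mk]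
    rw [Finset.sum_eq_single j]
    · rw [EuclideanSpace.single_apply, if_pos rfl]
    · intro i _ hij
      rw [EuclideanSpace.single_apply, if_neg hij, mul_zero]
    · intro h; exact absurd (Finset.mem_univ j) h
  set v : EuclideanSpace ℝ (Fin n) := EuclideanSpace.single j (r / a j) with hv
  have hfv : f v = r := by
    rw [hv, hsingle, mul_div_cancel₀ _ (by simpa using hj)]
  have hset : {x : EuclideanSpace ℝ (Fin n) | f x = r}
      = (fun x => x + v) '' (LinearMap.ker f : Set (EuclideanSpace ℝ (Fin n))) := by
    ext x
    simp only [Set.mem_setOf_eq, Set.mem_image, SetLike.mem_coe, LinearMap.mem_ker]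
    constructor
    · intro hx
      exact ⟨x - v, by rw [map_sub, hx, hfv, sub_self], by abel⟩
    · rintro ⟨z, hz, rfl⟩
      rw [map_add, hz, hfv, zero_add]
  have hker : LinearMap.ker f ≠ ⊤ := by
    intro h
    have : f (EuclideanSpace.single j 1) = 0 := by
      rw [← LinearMap.mem_ker, h]; trivial
    rw [hsingle, mul_one] at this
    exact hj (by simpa using this)
  have : {x : EuclideanSpace ℝ (Fin n) | ∑ i, a i * x i = r}
      = {x : EuclideanSpace ℝ (Fin n) | f x = r} := rfl
  rw [this, hset, Set.image_add_right, measure_preimage_add_right]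
  exact Measure.addHaar_submodule volume (LinearMap.ker f) hker

lemma harmonicKernel_eq (x y : EuclideanSpace ℝ (Fin n)) :
    harmonicKernel x y = (2 / Real.pi ^ ((n : ℝ) / 2)) * Real.Gamma ((n : ℝ) / 2) *
      (knum x y / ‖x - reflectLast y‖ ^ (n + 2)) := rfl

omit [NeZero n] in
lemma kernel_const_pos (hn : 0 < n) :
    0 < (2 / Real.pi ^ ((n : ℝ) / 2)) * Real.Gamma ((n : ℝ) / 2) := by
  have h1 : (0:ℝ) < Real.pi ^ ((n : ℝ) / 2) :=
    Real.rpow_pos_of_pos Real.pi_pos _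
  have h2 : (0:ℝ) < (n : ℝ) / 2 := by
    have : (0:ℝ) < (n : ℝ) := by exact_mod_cast hn
    linarith
  exact mul_pos (div_pos two_pos h1) (Real.Gamma_pos_of_pos h2)

lemma knum_eq_zero_of_kernel (hn : 0 < n) {x y : EuclideanSpace ℝ (Fin n)}
    (hden : ‖x - reflectLast y‖ ≠ 0) (hK : harmonicKernel x y = 0) : knum x y = 0 := by
  rw [harmonicKernel_eq] at hK
  rcases mul_eq_zero.1 hK with h | h
  · exact absurd h (kernel_const_pos hn).ne'
  · rcases div_eq_zero_iff.1 h with h | h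
    · exact h
    · exact absurd h (pow_ne_zero _ hden)

lemma avec_ne_zero (hn : 2 ≤ n) {y1 y2 : EuclideanSpace ℝ (Fin n)} (h12 : y1 ≠ y2) :
    avec y1 y2 ≠ 0 := by
  intro h
  apply h12
  have hn1 : ((n : ℝ) - 1) ≠ 0 := by
    have : (2:ℝ) ≤ (n : ℝ) := by exact_mod_cast hn
    linarith
  ext i
  have hi := congrFun h i
  simp only [avec, Pi.zero_apply] at hi
  by_cases hid : i = lastIdx n
  · rw [if_pos hid] at hi
    have := mul_eq_zero.1 hi
    rcases this with h' | h'
    · rcases mul_eq_zero.1 h' with h'' | h''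
      · norm_num at h''
      · exact absurd h'' hn1
    · linarith [sub_eq_zero.1 h']
  · rw [if_neg hid] at hi
    rcases mul_eq_zero.1 hi with h' | h'
    · norm_num at h'
    · linarith [sub_eq_zero.1 h']

lemma badset_null (hn : 2 ≤ n) {y1 y2 : EuclideanSpace ℝ (Fin n)} (h12 : y1 ≠ y2) :
    volume {x : EuclideanSpace ℝ (Fin n) |
      harmonicKernel x y1 = 0 ∧ harmonicKernel x y2 = 0} = 0 := by
  have hsub : {x : EuclideanSpace ℝ (Fin n) |
      harmonicKernel x y1 = 0 ∧ harmonicKernel x y2 = 0}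
      ⊆ ({x | ∑ i, avec y1 y2 i * x i
            = -(((n : ℝ) - 1) * ((y1 (lastIdx n)) ^ 2 - (y2 (lastIdx n)) ^ 2)
              - ∑ i ∈ Finset.univ.erase (lastIdx n), ((y1 i) ^ 2 - (y2 i) ^ 2))}
          ∪ ({reflectLast y1} ∪ {reflectLast y2})) := by
    rintro x ⟨h1, h2⟩
    by_cases hd1 : ‖x - reflectLast y1‖ = 0
    · right; left
      rw [norm_eq_zero, sub_eq_zero] at hd1
      exact hd1
    by_cases hd2 : ‖x - reflectLast y2‖ = 0
    · right; right
      rw [norm_eq_zero, sub_eq_zero] at hd2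
      exact hd2
    left
    have k1 := knum_eq_zero_of_kernel (by omega) hd1 h1
    have k2 := knum_eq_zero_of_kernel (by omega) hd2 h2
    have := knum_sub x y1 y2
    rw [k1, k2] at this
    simp only [Set.mem_setOf_eq]
    linarith
  refine measure_mono_null hsub ?_
  refine measure_union_null (volume_level_set_zero _ (avec_ne_zero hn h12) _) ?_
  exact measure_union_null (measure_singleton _) (measure_singleton _)

lemma continuous_lastCoord : Continuous (lastCoord : EuclideanSpace ℝ (Fin n) → ℝ) := by
  have h : (lastCoord : EuclideanSpace ℝ (Fin n) → ℝ)
      = fun x => EuclideanSpace.proj (𝕜 := ℝ) (lastIdx n) x := by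
    funext x; rw [lastCoord_eq]; rfl
  rw [h]
  exact (EuclideanSpace.proj (lastIdx n)).continuous

lemma reflectLast_eq (y : EuclideanSpace ℝ (Fin n)) :
    reflectLast y = y - (2 * y (lastIdx n)) • EuclideanSpace.single (lastIdx n) (1 : ℝ) := by
  ext i
  have : (y - (2 * y (lastIdx n)) • EuclideanSpace.single (lastIdx n) (1 : ℝ)) i
      = y i - (2 * y (lastIdx n)) * (EuclideanSpace.single (lastIdx n) (1:ℝ)) i := rfl
  rw [this, EuclideanSpace.single_apply]
  by_cases h : i = lastIdx n
  · rw [if_pos h, reflectLast, PiLp.toLp_apply, if_pos (by rw [h])]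
    subst h; ring
  · rw [if_neg h, reflectLast, PiLp.toLp_apply, if_neg (fun hc => h (Fin.ext hc))]
    ring

lemma continuous_reflectLast :
    Continuous (reflectLast : EuclideanSpace ℝ (Fin n) → EuclideanSpace ℝ (Fin n)) := by
  have h : (reflectLast : EuclideanSpace ℝ (Fin n) → EuclideanSpace ℝ (Fin n))
      = fun y => y - (2 * y (lastIdx n)) • EuclideanSpace.single (lastIdx n) (1 : ℝ) := by
    funext y; rw [reflectLast_eq]
  rw [h]
  exact continuous_id.sub
    ((continuous_const.mul (EuclideanSpace.proj (𝕜 := ℝ) (lastIdx n)).continuous).smul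
      continuous_const)

lemma kernel_continuousAt {x0 y0 : EuclideanSpace ℝ (Fin n)}
    (hx : 0 < lastCoord x0) (hy : 0 < lastCoord y0) :
    ContinuousAt (fun p : EuclideanSpace ℝ (Fin n) × EuclideanSpace ℝ (Fin n) =>
      harmonicKernel p.1 p.2) (x0, y0) := by
  have hden : ‖x0 - reflectLast y0‖ ≠ 0 := (norm_sub_reflect_pos x0 y0 hx hy).ne'
  have hnum : Continuous fun p : EuclideanSpace ℝ (Fin n) × EuclideanSpace ℝ (Fin n) =>
      (n : ℝ) * (lastCoord p.1 + lastCoord p.2) ^ 2 - ‖p.1 - reflectLast p.2‖ ^ 2 := by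
    refine Continuous.sub ?_ ?_
    · exact continuous_const.mul
        (((continuous_lastCoord.comp continuous_fst).add
          (continuous_lastCoord.comp continuous_snd)).pow 2)
    · exact ((continuous_fst.sub (continuous_reflectLast.comp continuous_snd)).norm).pow 2
  have hdenc : Continuous fun p : EuclideanSpace ℝ (Fin n) × EuclideanSpace ℝ (Fin n) =>
      ‖p.1 - reflectLast p.2‖ ^ (n + 2) :=
    ((continuous_fst.sub (continuous_reflectLast.comp continuous_snd)).norm).pow (n + 2)
  have : ContinuousAt (fun p : EuclideanSpace ℝ (Fin n) × EuclideanSpace ℝ (Fin n) =>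
      (2 / Real.pi ^ ((n : ℝ) / 2)) * Real.Gamma ((n : ℝ) / 2) *
        (((n : ℝ) * (lastCoord p.1 + lastCoord p.2) ^ 2 - ‖p.1 - reflectLast p.2‖ ^ 2) /
          ‖p.1 - reflectLast p.2‖ ^ (n + 2))) (x0, y0) := by
    refine continuousAt_const.mul (ContinuousAt.div hnum.continuousAt hdenc.continuousAt ?_)
    exact pow_ne_zero _ hden
  exact this

lemma measurableSet_upperHalfSpace : MeasurableSet (upperHalfSpace n) :=
  (isOpen_lt continuous_const continuous_lastCoord).measurableSet

lemma upperHalfSpace_pos : 0 < volume (upperHalfSpace n) := by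
  refine (isOpen_lt continuous_const continuous_lastCoord).measure_pos volume ?_
  refine ⟨EuclideanSpace.single (lastIdx n) (1 : ℝ), ?_⟩
  show 0 < lastCoord (EuclideanSpace.single (lastIdx n) (1:ℝ))
  rw [lastCoord_eq, EuclideanSpace.single_apply, if_pos rfl]
  norm_num

set_option linter.unusedSectionVars false in
lemma abs_coord_le (z : EuclideanSpace ℝ (Fin n)) (i : Fin n) : |z i| ≤ ‖z‖ := by
  rw [EuclideanSpace.norm_eq]
  have h1 : |z i| = Real.sqrt (‖z i‖ ^ 2) := by
    rw [Real.norm_eq_abs, sq_abs, Real.sqrt_sq_eq_abs]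
  rw [h1]
  apply Real.sqrt_le_sqrt
  exact Finset.single_le_sum (f := fun j => ‖z j‖ ^ 2) (fun j _ => by positivity)
    (Finset.mem_univ i)

omit [NeZero n] in
lemma exists_density_point {s Z : Set (EuclideanSpace ℝ (Fin n))} (hs : MeasurableSet s)
    (h0 : volume s ≠ 0) (hZ : volume Z = 0) :
    ∃ x ∈ s, x ∉ Z ∧ ∀ ρ > 0, 0 < volume (s ∩ Metric.closedBall x ρ) := by
  have hbes := Besicovitch.ae_tendsto_measure_inter_div
    (volume : Measure (EuclideanSpace ℝ (Fin n))) s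
  have hmem : ∀ᵐ x ∂(volume.restrict s), x ∈ s := ae_restrict_mem hs
  have hZr : (volume.restrict s) Z = 0 :=
    le_antisymm (le_trans (Measure.restrict_le_self Z) hZ.le) zero_le
  have hZ' : ∀ᵐ x ∂(volume.restrict s), x ∉ Z := by
    rw [ae_iff]
    simpa using hZr
  have hne : (volume.restrict s) ≠ 0 := by
    intro h
    apply h0
    have : (volume.restrict s) Set.univ = 0 := by rw [h]; rfl
    rwa [Measure.restrict_apply_univ] at this
  haveI : (ae (volume.restrict s)).NeBot := ae_neBot.2 hne
  obtain ⟨x, hx_t, hxs, hxZ⟩ := (hbes.and (hmem.and hZ')).exists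
  refine ⟨x, hxs, hxZ, ?_⟩
  have hev : ∀ᶠ r in nhdsWithin (0:ℝ) (Set.Ioi 0),
      (1:ℝ≥0∞)/2 < volume (s ∩ Metric.closedBall x r) / volume (Metric.closedBall x r) :=
    hx_t.eventually (eventually_gt_nhds (by norm_num))
  rw [Filter.eventually_iff] at hev
  obtain ⟨u, hu, hIoo⟩ := mem_nhdsGT_iff_exists_Ioo_subset.1 hev
  intro ρ hρ
  have hu0 : (0:ℝ) < u := hu
  set r := min ρ (u/2) with hr
  have hr0 : 0 < r := lt_min hρ (by linarith)
  have hrIoo : r ∈ Set.Ioo (0:ℝ) u := ⟨hr0, lt_of_le_of_lt (min_le_right _ _) (by linarith)⟩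
  have hhalf := hIoo hrIoo
  simp only [Set.mem_setOf_eq] at hhalf
  have hnum : volume (s ∩ Metric.closedBall x r) ≠ 0 := by
    intro h
    rw [h, ENNReal.zero_div] at hhalf
    simp at hhalf
  calc (0:ℝ≥0∞) < volume (s ∩ Metric.closedBall x r) := pos_iff_ne_zero.2 hnum
    _ ≤ volume (s ∩ Metric.closedBall x ρ) :=
        measure_mono (Set.inter_subset_inter_right _
          (Metric.closedBall_subset_closedBall (min_le_left _ _)))

end Geo

set_option maxHeartbeats 2000000 in
theorem modular_inequality_harmonicBergman_implies_constant_exponent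
    (n : ℕ) (hn : 2 ≤ n)
    (p : EuclideanSpace ℝ (Fin n) → ℝ) (hpm : Measurable p)
    (hp1 : ∀ x ∈ upperHalfSpace n, 1 ≤ p x)
    (hinf : 1 < essInf p (volume.restrict (upperHalfSpace n)))
    (hsup : ∃ M : ℝ, ∀ᵐ x ∂(volume.restrict (upperHalfSpace n)), p x ≤ M)
    (C : ℝ) (hC : 0 < C)
    (hmod : ∀ f : EuclideanSpace ℝ (Fin n) → ℝ, Measurable f →
      (∫⁻ x in upperHalfSpace n, ENNReal.ofReal (|f x| ^ p x)) < ⊤ →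
      (∀ x ∈ upperHalfSpace n,
        IntegrableOn (fun y => harmonicKernel x y * f y) (upperHalfSpace n)) →
      (∫⁻ x in upperHalfSpace n, ENNReal.ofReal (|harmonicBergman f x| ^ p x))
        ≤ ENNReal.ofReal C *
          ∫⁻ x in upperHalfSpace n, ENNReal.ofReal (|f x| ^ p x)) :
    ∃ c : ℝ, ∀ᵐ x ∂(volume.restrict (upperHalfSpace n)), p x = c := by
  haveI : NeZero n := ⟨by omega⟩
  set μ := volume.restrict (upperHalfSpace n) with hμ
  by_contra hcon
  push_neg at hcon
  obtain ⟨M, hM⟩ := hsup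
  have hH : MeasurableSet (upperHalfSpace n) := measurableSet_upperHalfSpace
  have haeH : ∀ᵐ x ∂μ, x ∈ upperHalfSpace n := ae_restrict_mem hH
  have hae1 : ∀ᵐ x ∂μ, 1 ≤ p x := haeH.mono fun x hx => hp1 x hx
  classical
  -- Step 1: find rationals a < b with both {p < a} and {p > b} of positive measure
  set T : Set ℚ := {q : ℚ | μ {x | p x < (q : ℝ)} = 0} with hT
  have hT0 : (0 : ℚ) ∈ T := by
    have h1 : μ {x | ¬ (1 ≤ p x)} = 0 := by rw [ae_iff] at hae1; exact hae1
    refine measure_mono_null (fun x hx => ?_) h1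
    simp only [mem_setOf_eq, Rat.cast_zero] at hx ⊢
    intro h; linarith
  have hTne : ((fun q : ℚ => (q : ℝ)) '' T).Nonempty := ⟨0, ⟨0, hT0, by norm_num⟩⟩
  have hμuniv : μ Set.univ ≠ 0 := by
    rw [hμ, Measure.restrict_apply_univ]
    exact upperHalfSpace_pos.ne'
  have hTbdd : BddAbove ((fun q : ℚ => (q : ℝ)) '' T) := by
    refine ⟨M + 1, ?_⟩
    rintro z ⟨q, hq, rfl⟩
    by_contra hz
    push_neg at hz
    have h1 : μ {x | ¬ (p x ≤ M)} = 0 := by rw [ae_iff] at hM; exact hM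
    have h2 : μ {x | p x ≤ M} = 0 := by
      refine measure_mono_null (fun x hx => ?_) hq
      simp only [mem_setOf_eq] at hx ⊢; linarith
    refine hμuniv (measure_mono_null (fun x _ => ?_) (measure_union_null h2 h1))
    by_cases h : p x ≤ M
    · exact Or.inl h
    · exact Or.inr h
  set c := sSup ((fun q : ℚ => (q : ℝ)) '' T) with hc
  have hle : ∀ᵐ x ∂μ, c ≤ p x := by
    have hall : ∀ᵐ x ∂μ, ∀ q ∈ T, (q : ℝ) ≤ p x := by
      refine (ae_ball_iff (Set.to_countable T)).2 fun q hq => ?_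
      rw [ae_iff]
      refine measure_mono_null (fun x hx => ?_) hq
      simpa [not_le] using hx
    refine hall.mono fun x hx => csSup_le hTne ?_
    rintro z ⟨q, hq, rfl⟩
    exact hx q hq
  have hlow : μ {x | p x < c} = 0 := by
    refine measure_mono_null (fun x hx => ?_)
      ((measure_biUnion_null_iff (Set.to_countable T)).2
        (fun q hq => hq : ∀ q ∈ T, μ {x | p x < (q : ℝ)} = 0))
    obtain ⟨z, ⟨q, hq, rfl⟩, hz⟩ := exists_lt_of_lt_csSup hTne hx
    exact Set.mem_biUnion hq hz
  have hupp : μ {x | c < p x} ≠ 0 := by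
    intro h
    refine hcon c ?_
    rw [ae_iff]
    refine measure_mono_null (fun x hx => ?_) (measure_union_null hlow h)
    rcases lt_or_gt_of_ne (by simpa using hx : ¬ p x = c) with h' | h'
    · exact Or.inl h'
    · exact Or.inr h'
  have hstep : ∀ s : ℝ, μ {x | s < p x} ≠ 0 →
      ∃ q : ℚ, s < (q : ℝ) ∧ μ {x | (q : ℝ) < p x} ≠ 0 := by
    intro s hs
    by_contra hq
    push_neg at hq
    apply hs
    refine measure_mono_null (fun x hx => ?_)
      ((measure_iUnion_null_iff).2
        (fun q : ℚ => ?_) :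
        volume.restrict (upperHalfSpace n) (⋃ q : ℚ, {x | s < (q:ℝ) ∧ (q:ℝ) < p x}) = 0)
    · obtain ⟨q, hq1, hq2⟩ := exists_rat_btwn (Set.mem_setOf_eq.mp hx)
      exact Set.mem_iUnion.2 ⟨q, hq1, hq2⟩
    · by_cases h : s < (q : ℝ)
      · exact measure_mono_null (fun x hx => hx.2) (hq q h)
      · refine measure_mono_null (fun x hx => (h hx.1).elim) (measure_empty (μ := μ) (α := EuclideanSpace ℝ (Fin n)))
  obtain ⟨q0, hq0c, hq0⟩ := hstep c hupp
  obtain ⟨q1, hq01, hq1⟩ := hstep q0 hq0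
  set a : ℝ := (q0 : ℝ) with ha
  set b : ℝ := (q1 : ℝ) with hb
  have hab : a < b := hq01
  have hA0 : μ {x | p x < a} ≠ 0 := by
    intro h
    have hmem : q0 ∈ T := h
    have : (q0 : ℝ) ≤ c := le_csSup hTbdd ⟨q0, hmem, rfl⟩
    linarith
  -- Step 2: sets and points
  set A := {x | p x < a} ∩ upperHalfSpace n with hA
  set B := {x | b < p x} ∩ upperHalfSpace n with hB
  have hAmeas : MeasurableSet A := (measurableSet_lt hpm measurable_const).inter hH
  have hBmeas : MeasurableSet B := (measurableSet_lt measurable_const hpm).inter hH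
  have hAvol : volume A ≠ 0 := by
    intro h
    apply hA0
    rw [hμ, Measure.restrict_apply (measurableSet_lt hpm measurable_const)]
    exact h
  have hBvol : volume B ≠ 0 := by
    intro h
    apply hq1
    rw [hμ, Measure.restrict_apply (measurableSet_lt measurable_const hpm)]
    exact h
  obtain ⟨y1, hy1B, -, hy1d⟩ := exists_density_point (Z := ∅) hBmeas hBvol measure_empty
  obtain ⟨y2, hy2B, hy21, hy2d⟩ :=
    exists_density_point (Z := {y1}) hBmeas hBvol (measure_singleton _)
  have h12 : y1 ≠ y2 := fun h => hy21 (Set.mem_singleton_iff.2 h.symm)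
  obtain ⟨xA, hxAA, hxAZ, hxAd⟩ := exists_density_point hAmeas hAvol (badset_null hn h12)
  have hxAH : xA ∈ upperHalfSpace n := hxAA.2
  obtain ⟨yB, hyBB, hyBd, hκne⟩ :
      ∃ y, y ∈ B ∧ (∀ ρ > 0, 0 < volume (B ∩ Metric.closedBall y ρ)) ∧
        harmonicKernel xA y ≠ 0 := by
    by_cases h1 : harmonicKernel xA y1 = 0
    · exact ⟨y2, hy2B, hy2d, fun h2 => hxAZ ⟨h1, h2⟩⟩
    · exact ⟨y1, hy1B, hy1d, h1⟩
  have hyBH : yB ∈ upperHalfSpace n := hyBB.2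
  set κ := harmonicKernel xA yB with hκ
  have habsκ : 0 < |κ| := abs_pos.2 hκne
  -- Step 3: continuity radius
  have hcontp := kernel_continuousAt (n := n) (hxAH : 0 < lastCoord xA) (hyBH : 0 < lastCoord yB)
  have hev : ∀ᶠ q : EuclideanSpace ℝ (Fin n) × EuclideanSpace ℝ (Fin n) in nhds (xA, yB),
      |harmonicKernel q.1 q.2 - κ| < |κ| / 2 := by
    have h2 : 0 < |κ| / 2 := by linarith
    have := Metric.tendsto_nhds.mp hcontp (|κ| / 2) h2
    simpa [Real.dist_eq] using this
  obtain ⟨δ, hδ0, hδ⟩ := Metric.eventually_nhds_iff.1 hev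
  have hyBlast : 0 < lastCoord yB := hyBH
  set ρ := min (δ / 2) (lastCoord yB / 2) with hρdef
  have hρ0 : 0 < ρ := lt_min (by linarith) (by linarith)
  have hker_close : ∀ x ∈ Metric.closedBall xA ρ, ∀ y ∈ Metric.closedBall yB ρ,
      |harmonicKernel x y - κ| < |κ| / 2 := by
    intro x hx y hy
    have hd : dist (x, y) (xA, yB) < δ := by
      rw [Prod.dist_eq]
      have hxd : dist x xA ≤ ρ := Metric.mem_closedBall.1 hx
      have hyd : dist y yB ≤ ρ := Metric.mem_closedBall.1 hy
      have hle2 : ρ ≤ δ / 2 := min_le_left _ _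
      exact max_lt (by simpa using lt_of_le_of_lt hxd (by linarith))
        (by simpa using lt_of_le_of_lt hyd (by linarith))
    have h9 := hδ hd
    exact h9
  have hballH : Metric.closedBall yB ρ ⊆ upperHalfSpace n := by
    intro y hy
    have hd : |y (lastIdx n) - yB (lastIdx n)| ≤ ρ := by
      have heq : (y - yB) (lastIdx n) = y (lastIdx n) - yB (lastIdx n) := rfl
      calc |y (lastIdx n) - yB (lastIdx n)| = |(y - yB) (lastIdx n)| := by rw [heq]
        _ ≤ ‖y - yB‖ := abs_coord_le _ _
        _ = dist y yB := (dist_eq_norm _ _).symm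
        _ ≤ ρ := Metric.mem_closedBall.1 hy
    have hρ2 : ρ ≤ lastCoord yB / 2 := min_le_right _ _
    have habs := abs_le.1 hd
    show 0 < lastCoord y
    rw [lastCoord_eq (n := n)] at hyBlast hρ2 ⊢
    linarith [habs.1]
  -- Step 4: the sets SA, SB
  set SB := B ∩ Metric.closedBall yB ρ with hSBdef
  set SA := A ∩ Metric.closedBall xA ρ with hSAdef
  have hSBmeas : MeasurableSet SB := hBmeas.inter measurableSet_closedBall
  have hSAmeas : MeasurableSet SA := hAmeas.inter measurableSet_closedBall
  have hSBpos : 0 < volume SB := hyBd ρ hρ0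
  have hSApos : 0 < volume SA := hxAd ρ hρ0
  have hSBfin : volume SB < ⊤ :=
    lt_of_le_of_lt (measure_mono inter_subset_right) measure_closedBall_lt_top
  have hSAfin : volume SA < ⊤ :=
    lt_of_le_of_lt (measure_mono inter_subset_right) measure_closedBall_lt_top
  have hSBH : SB ⊆ upperHalfSpace n := fun y hy => (hy.1 : y ∈ B).2
  have hSAH : SA ⊆ upperHalfSpace n := fun x hx => (hx.1 : x ∈ A).2
  have hsign : ∀ x ∈ SA, ∀ y ∈ SB, |harmonicKernel x y - κ| < |κ| / 2 :=
    fun x hx y hy => hker_close x hx.2 y hy.2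
  -- Step 5: integrability of the kernel on SB
  have hcont_y : ∀ x ∈ upperHalfSpace n,
      ContinuousOn (fun y => harmonicKernel x y) (Metric.closedBall yB ρ) := by
    intro x hx y hy
    have hyH : y ∈ upperHalfSpace n := hballH hy
    have h1 := kernel_continuousAt (n := n) (hx : 0 < lastCoord x) (hyH : 0 < lastCoord y)
    have h2 : ContinuousAt (fun y : EuclideanSpace ℝ (Fin n) => ((x, y) :
        EuclideanSpace ℝ (Fin n) × EuclideanSpace ℝ (Fin n))) y :=
      (continuous_const.prodMk continuous_id).continuousAt
    exact (h1.comp h2).continuousWithinAt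
  have hint_SB : ∀ x ∈ upperHalfSpace n,
      IntegrableOn (fun y => harmonicKernel x y) SB volume := fun x hx =>
    ((hcont_y x hx).integrableOn_compact (isCompact_closedBall _ _)).mono_set
      inter_subset_right
  -- Step 6: constants
  set vB := (volume SB).toReal with hvB
  set vA := (volume SA).toReal with hvA
  have hvBpos : 0 < vB := ENNReal.toReal_pos hSBpos.ne' hSBfin.ne
  have hvApos : 0 < vA := ENNReal.toReal_pos hSApos.ne' hSAfin.ne
  set c₂ := |κ| / 2 * vB with hc₂
  have hc₂pos : 0 < c₂ := by positivity
  have hba : 0 < b - a := by linarith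
  set ε := (c₂ ^ a * vA) / (C * vB) with hε
  have hεpos : 0 < ε :=
    div_pos (mul_pos (Real.rpow_pos_of_pos hc₂pos a) hvApos) (mul_pos hC hvBpos)
  set t := min (min 1 (1 / (c₂ + 1))) (ε ^ (1 / (b - a)) / 2) with ht
  have ht0 : 0 < t := by
    refine lt_min (lt_min one_pos (by positivity)) ?_
    have := Real.rpow_pos_of_pos hεpos (1 / (b - a))
    linarith
  have ht1 : t ≤ 1 := le_trans (min_le_left _ _) (min_le_left _ _)
  have htc₂ : 0 < t * c₂ := mul_pos ht0 hc₂pos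
  have htc₂1 : t * c₂ ≤ 1 := by
    have h1 : t ≤ 1 / (c₂ + 1) := le_trans (min_le_left _ _) (min_le_right _ _)
    have h2 : t * c₂ ≤ (1 / (c₂ + 1)) * c₂ := by nlinarith
    have h3 : (1 / (c₂ + 1)) * c₂ ≤ 1 := by
      rw [div_mul_eq_mul_div, one_mul, div_le_one (by linarith)]
      linarith
    linarith
  set f := SB.indicator (fun _ => t) with hfdef
  -- Step 7: hypotheses of hmod
  have hfmeas : Measurable f := measurable_const.indicator hSBmeas
  have hppos : ∀ x ∈ upperHalfSpace n, 0 < p x := fun x hx =>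
    lt_of_lt_of_le one_pos (hp1 x hx)
  have hfp_le : ∀ x ∈ upperHalfSpace n, ENNReal.ofReal (|f x| ^ p x)
      ≤ SB.indicator (fun _ => ENNReal.ofReal (t ^ b)) x := by
    intro x hx
    by_cases hxSB : x ∈ SB
    · rw [hfdef, Set.indicator_of_mem hxSB, Set.indicator_of_mem hxSB]
      refine ENNReal.ofReal_le_ofReal ?_
      rw [abs_of_pos ht0]
      exact Real.rpow_le_rpow_of_exponent_ge ht0 ht1 (le_of_lt (hxSB.1.1 : b < p x))
    · rw [hfdef, Set.indicator_of_notMem hxSB, Set.indicator_of_notMem hxSB]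
      rw [abs_zero, Real.zero_rpow (hppos x hx).ne']
      simp
  have hRHS_le : (∫⁻ x in upperHalfSpace n, ENNReal.ofReal (|f x| ^ p x))
      ≤ ENNReal.ofReal (t ^ b) * volume SB := by
    calc ∫⁻ x in upperHalfSpace n, ENNReal.ofReal (|f x| ^ p x)
        ≤ ∫⁻ x in upperHalfSpace n, SB.indicator (fun _ => ENNReal.ofReal (t ^ b)) x :=
          lintegral_mono_ae (haeH.mono fun x hx => hfp_le x hx)
      _ ≤ ∫⁻ x, SB.indicator (fun _ => ENNReal.ofReal (t ^ b)) x ∂volume :=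
          lintegral_mono' Measure.restrict_le_self le_rfl
      _ = ENNReal.ofReal (t ^ b) * volume SB := by
          rw [lintegral_indicator hSBmeas, setLIntegral_const]
  have hfin : (∫⁻ x in upperHalfSpace n, ENNReal.ofReal (|f x| ^ p x)) < ⊤ :=
    lt_of_le_of_lt hRHS_le (ENNReal.mul_lt_top ENNReal.ofReal_lt_top hSBfin)
  have hint : ∀ x ∈ upperHalfSpace n,
      IntegrableOn (fun y => harmonicKernel x y * f y) (upperHalfSpace n) := by
    intro x hx
    have heq : (fun y => harmonicKernel x y * f y)
        = SB.indicator (fun y => harmonicKernel x y * t) := by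
      funext y
      by_cases hy : y ∈ SB
      · rw [hfdef, Set.indicator_of_mem hy, Set.indicator_of_mem hy]
      · rw [hfdef, Set.indicator_of_notMem hy, Set.indicator_of_notMem hy, mul_zero]
    rw [heq]
    exact ((integrable_indicator_iff hSBmeas).2 ((hint_SB x hx).mul_const t)).integrableOn
  have hkey := hmod f hfmeas hfin hint
  -- Step 8: lower bound for |harmonicBergman f| on SA
  have hbf : ∀ x ∈ SA, t * c₂ ≤ |harmonicBergman f x| := by
    intro x hx
    have hxH' : x ∈ upperHalfSpace n := hSAH hx
    have heq : (fun y => harmonicKernel x y * f y)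
        = fun y => SB.indicator (fun y => t * harmonicKernel x y) y := by
      funext y
      by_cases hy : y ∈ SB
      · rw [hfdef, Set.indicator_of_mem hy, Set.indicator_of_mem hy, mul_comm]
      · rw [hfdef, Set.indicator_of_notMem hy, Set.indicator_of_notMem hy, mul_zero]
    have hbf_eq : harmonicBergman f x = t * ∫ y in SB, harmonicKernel x y := by
      rw [harmonicBergman, show (fun y => harmonicKernel x y * f y)
        = fun y => SB.indicator (fun y => t * harmonicKernel x y) y from heq,
        setIntegral_indicator hSBmeas,
        inter_eq_self_of_subset_right hSBH, integral_const_mul]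
    have hIbound : |κ| / 2 * vB ≤ |∫ y in SB, harmonicKernel x y| := by
      rcases lt_or_gt_of_ne hκne with hneg | hpos
      · have hge : ∀ y ∈ SB, |κ| / 2 ≤ -harmonicKernel x y := by
          intro y hy
          have h1 := abs_lt.1 (hsign x hx y hy)
          have h2 : |κ| = -κ := abs_of_neg hneg
          linarith [h1.2]
        have hIe : |κ| / 2 * (volume SB).toReal ≤ ∫ y in SB, -harmonicKernel x y :=
          setIntegral_ge_of_const_le_real hSBmeas hSBfin.ne hge (hint_SB x hxH').neg
        rw [integral_neg] at hIe
        calc |κ| / 2 * vB ≤ -∫ y in SB, harmonicKernel x y := hIe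
          _ ≤ |∫ y in SB, harmonicKernel x y| := neg_le_abs _
      · have hge : ∀ y ∈ SB, |κ| / 2 ≤ harmonicKernel x y := by
          intro y hy
          have h1 := abs_lt.1 (hsign x hx y hy)
          have h2 : |κ| = κ := abs_of_pos hpos
          linarith [h1.1]
        have hIe : |κ| / 2 * (volume SB).toReal ≤ ∫ y in SB, harmonicKernel x y :=
          setIntegral_ge_of_const_le_real hSBmeas hSBfin.ne hge (hint_SB x hxH')
        exact le_trans hIe (le_abs_self _)
    rw [hbf_eq, abs_mul, abs_of_pos ht0, hc₂]
    calc t * (|κ| / 2 * vB) ≤ t * |∫ y in SB, harmonicKernel x y| :=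
          mul_le_mul_of_nonneg_left hIbound ht0.le
      _ = |t| * |∫ y in SB, harmonicKernel x y| := by rw [abs_of_pos ht0]
      _ = _ := by rw [abs_of_pos ht0]
  -- Step 9: lower bound for the LHS
  have hLHS_ge : ENNReal.ofReal ((t * c₂) ^ a) * volume SA
      ≤ ∫⁻ x in upperHalfSpace n, ENNReal.ofReal (|harmonicBergman f x| ^ p x) := by
    have hpt : ∀ x, SA.indicator (fun _ => ENNReal.ofReal ((t * c₂) ^ a)) x
        ≤ ENNReal.ofReal (|harmonicBergman f x| ^ p x) := by
      intro x
      by_cases hx : x ∈ SA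
      · rw [Set.indicator_of_mem hx]
        refine ENNReal.ofReal_le_ofReal ?_
        have h1 : (t * c₂) ^ a ≤ (t * c₂) ^ p x :=
          Real.rpow_le_rpow_of_exponent_ge htc₂ htc₂1 (le_of_lt (hx.1.1 : p x < a))
        refine le_trans h1 (Real.rpow_le_rpow htc₂.le (hbf x hx) ?_)
        exact le_trans zero_le_one (hp1 x (hSAH hx))
      · rw [Set.indicator_of_notMem hx]
        exact zero_le
    calc ENNReal.ofReal ((t * c₂) ^ a) * volume SA
        = ∫⁻ x, SA.indicator (fun _ => ENNReal.ofReal ((t * c₂) ^ a)) x ∂μ := by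
          rw [lintegral_indicator hSAmeas, setLIntegral_const, hμ,
            Measure.restrict_apply hSAmeas, inter_eq_self_of_subset_left hSAH]
      _ ≤ ∫⁻ x in upperHalfSpace n, ENNReal.ofReal (|harmonicBergman f x| ^ p x) :=
          lintegral_mono hpt
  -- Step 10: combine and derive contradiction
  have hfinal : ENNReal.ofReal ((t * c₂) ^ a) * volume SA
      ≤ ENNReal.ofReal C * (ENNReal.ofReal (t ^ b) * volume SB) :=
    le_trans hLHS_ge (le_trans hkey (mul_le_mul_right hRHS_le _))
  have hRne : ENNReal.ofReal C * (ENNReal.ofReal (t ^ b) * volume SB) ≠ ⊤ :=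
    ENNReal.mul_ne_top ENNReal.ofReal_ne_top
      (ENNReal.mul_ne_top ENNReal.ofReal_ne_top hSBfin.ne)
  have hreal := ENNReal.toReal_mono hRne hfinal
  rw [ENNReal.toReal_mul, ENNReal.toReal_mul, ENNReal.toReal_mul,
    ENNReal.toReal_ofReal (Real.rpow_nonneg htc₂.le a),
    ENNReal.toReal_ofReal hC.le,
    ENNReal.toReal_ofReal (Real.rpow_nonneg ht0.le b)] at hreal
  -- hreal : (t*c₂)^a * vA ≤ C * (t^b * vB)
  have hsplit : (t * c₂) ^ a = t ^ a * c₂ ^ a := Real.mul_rpow ht0.le hc₂pos.le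
  have hexp : a + (b - a) = b := by ring
  have htb : t ^ b = t ^ a * t ^ (b - a) := by
    conv_lhs => rw [← hexp]
    rw [Real.rpow_add ht0]
  rw [hsplit, htb] at hreal
  have hta : 0 < t ^ a := Real.rpow_pos_of_pos ht0 a
  have hred : c₂ ^ a * vA ≤ C * (t ^ (b - a) * vB) := by
    have h1 : t ^ a * (c₂ ^ a * vA) ≤ t ^ a * (C * (t ^ (b - a) * vB)) := by
      calc t ^ a * (c₂ ^ a * vA) = t ^ a * c₂ ^ a * vA := by ring
        _ ≤ C * (t ^ a * t ^ (b - a) * vB) := hreal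
        _ = t ^ a * (C * (t ^ (b - a) * vB)) := by ring
    exact le_of_mul_le_mul_left h1 hta
  have htlt : t ^ (b - a) < ε := by
    have h1 : t ≤ ε ^ (1 / (b - a)) / 2 := min_le_right _ _
    have hpos' : 0 < ε ^ (1 / (b - a)) := Real.rpow_pos_of_pos hεpos _
    have h2 : t < ε ^ (1 / (b - a)) := by linarith
    calc t ^ (b - a) < (ε ^ (1 / (b - a))) ^ (b - a) :=
          Real.rpow_lt_rpow ht0.le h2 hba
      _ = ε := by
          rw [← Real.rpow_mul hεpos.le, one_div_mul_cancel hba.ne', Real.rpow_one]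
  have hcontr : C * (t ^ (b - a) * vB) < c₂ ^ a * vA := by
    have h1 : C * (t ^ (b - a) * vB) < C * (ε * vB) := by
      have := mul_lt_mul_of_pos_right htlt hvBpos
      nlinarith
    have h2 : C * (ε * vB) = c₂ ^ a * vA := by
      rw [hε]
      field_simp
    linarith
  linarith

end
end
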